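/- Let φ be a positive non-decreasing function with Σ_k 1/(k φ(k)) < ∞. Then for Lebesgue-almost every α ∈ (0,1), limsup_{M→∞} [Σ_{m=1}^M 1/‖mα‖] / (M log M · φ(log M)) = 0. -/

import Mathlib

open Filter MeasureTheory Real

/-- Distance from `x` to the nearest integer. -/
noncomputable def nd (x : ℝ) : ℝ := |x - round x|

/-- The Gauss map `x ↦ frac (1/x)` (with `0 ↦ 0`). -/
noncomputable def gaussMap (x : ℝ) : ℝ := Int.fract x⁻¹

/-- The `k`-th partial quotient of the continued fraction of `α` (for `k ≥ 1`). -/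
noncomputable def cfA (α : ℝ) (k : ℕ) : ℕ := ⌊(gaussMap^[k-1] α)⁻¹⌋₊

/-- Denominators of the continued fraction convergents of `α`. -/
noncomputable def cfQ (α : ℝ) : ℕ → ℕ
  | 0 => 1
  | 1 => cfA α 1
  | (k+2) => cfA α (k+2) * cfQ α (k+1) + cfQ α k

/-- Numerators of the continued fraction convergents of `α`. -/
noncomputable def cfP (α : ℝ) : ℕ → ℕ
  | 0 => 0
  | 1 => 1
  | (k+2) => cfA α (k+2) * cfP α (k+1) + cfP α k

/-- `S α M = ∑_{m=1}^M 1/‖mα‖`. -/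
noncomputable def S (α : ℝ) (M : ℕ) : ℝ := ∑ m ∈ Finset.Icc 1 M, 1 / nd (m * α)

set_option linter.unusedVariables false
set_option linter.unusedSectionVars false
set_option maxHeartbeats 1000000



lemma nd_nonneg (x : ℝ) : 0 ≤ nd x := abs_nonneg _

lemma nd_le (x : ℝ) (z : ℤ) : nd x ≤ |x - z| := by
  unfold nd
  rcases eq_or_ne (round x) z with h | h
  · rw [h]
  · have h1 : |x - round x| ≤ 1/2 := abs_sub_round x
    have h2 : (1:ℝ) ≤ |(round x : ℝ) - z| := by
      have : round x - z ≠ 0 := sub_ne_zero.mpr (by exact_mod_cast h)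
      have := Int.one_le_abs this
      calc (1:ℝ) ≤ |(round x - z : ℤ)| := by exact_mod_cast this
        _ = |(round x : ℝ) - z| := by push_cast [Int.cast_abs]; ring_nf
    have : |(round x:ℝ) - z| ≤ |x - round x| + |x - z| := by
      calc |(round x:ℝ) - z| = |(x - z) - (x - round x)| := by ring_nf
        _ ≤ |x - z| + |x - round x| := abs_sub _ _
        _ = |x - round x| + |x - z| := by ring
    linarith

lemma nd_neg (x : ℝ) : nd (-x) = nd x := by
  apply le_antisymm
  · have := nd_le (-x) (-(round x))
    calc nd (-x) ≤ |(-x) - (-(round x):ℤ)| := this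
      _ = |x - round x| := by push_cast; rw [show -x - -(round x:ℝ) = -(x - round x) by ring, abs_neg]
      _ = nd x := rfl
  · have := nd_le x (-(round (-x)))
    calc nd x ≤ |x - (-(round (-x)):ℤ)| := this
      _ = |(-x) - round (-x)| := by push_cast; rw [show x - -(round (-x):ℝ) = -(-x - round (-x)) by ring, abs_neg]
      _ = nd (-x) := rfl

lemma nd_le_fract (x : ℝ) : nd x ≤ Int.fract x := by
  have := nd_le x ⌊x⌋
  rwa [Int.self_sub_floor, abs_of_nonneg (Int.fract_nonneg x)] at this

lemma nd_le_one_sub_fract (x : ℝ) : nd x ≤ 1 - Int.fract x := by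
  have := nd_le x (⌊x⌋ + 1)
  have h1 : |x - (⌊x⌋ + 1 : ℤ)| = 1 - Int.fract x := by
    push_cast
    rw [abs_of_nonpos (by have := Int.fract_lt_one x; unfold Int.fract at *; linarith)]
    unfold Int.fract; ring
  rwa [h1] at this

lemma nd_eq_fract_or (x : ℝ) : nd x = Int.fract x ∨ nd x = 1 - Int.fract x := by
  have h : round x = ⌊x⌋ ∨ round x = ⌊x⌋ + 1 := by
    rw [round_eq]
    have h1 := Int.floor_le x
    have h2 := Int.lt_floor_add_one x
    rcases le_or_gt (⌊x + 1/2⌋ : ℤ) ⌊x⌋ with h3 | h3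
    · left
      have : (⌊x⌋ : ℤ) ≤ ⌊x + 1/2⌋ := Int.floor_le_floor (by linarith)
      omega
    · right
      have : (⌊x + 1/2⌋ : ℤ) < ⌊x⌋ + 2 := by
        apply Int.floor_lt.2
        push_cast
        linarith
      omega
  unfold nd
  rcases h with h | h
  · left; rw [h, Int.self_sub_floor, abs_of_nonneg (Int.fract_nonneg x)]
  · right
    rw [h]
    push_cast
    rw [abs_of_nonpos (by have := Int.fract_lt_one x; unfold Int.fract at *; linarith)]
    unfold Int.fract; ring



namespace GC

noncomputable def xs (α : ℝ) (k : ℕ) : ℝ := gaussMap^[k] α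
noncomputable def aa (α : ℝ) (k : ℕ) : ℕ := ⌊(xs α k)⁻¹⌋₊
noncomputable def bb (α : ℝ) : ℕ → ℝ
  | 0 => 1
  | (k+1) => bb α k * xs α k

lemma cfA_eq (α : ℝ) (k : ℕ) : cfA α (k+1) = aa α k := rfl
lemma q_zero (α : ℝ) : cfQ α 0 = 1 := rfl
lemma q_one (α : ℝ) : cfQ α 1 = aa α 0 := rfl
lemma p_zero (α : ℝ) : cfP α 0 = 0 := rfl
lemma p_one (α : ℝ) : cfP α 1 = 1 := rfl
lemma q_rec (α : ℝ) (k : ℕ) : cfQ α (k+2) = aa α (k+1) * cfQ α (k+1) + cfQ α k := rfl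
lemma p_rec (α : ℝ) (k : ℕ) : cfP α (k+2) = aa α (k+1) * cfP α (k+1) + cfP α k := rfl
lemma bb_zero (α : ℝ) : bb α 0 = 1 := rfl
lemma bb_succ (α : ℝ) (k : ℕ) : bb α (k+1) = bb α k * xs α k := rfl
lemma xs_zero (α : ℝ) : xs α 0 = α := rfl
lemma xs_succ (α : ℝ) (k : ℕ) : xs α (k+1) = gaussMap (xs α k) := Function.iterate_succ_apply' _ _ _

lemma gauss_step {x : ℝ} (hx : x ∈ Set.Ioo (0:ℝ) 1) (hirr : Irrational x) :
    gaussMap x ∈ Set.Ioo (0:ℝ) 1 ∧ Irrational (gaussMap x) := by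
  have hinv : Irrational x⁻¹ := hirr.inv
  have hfr : Irrational (Int.fract x⁻¹) := by
    unfold Int.fract
    exact hinv.sub_intCast _
  constructor
  · constructor
    · rcases lt_or_eq_of_le (Int.fract_nonneg x⁻¹) with h | h
      · exact h
      · exfalso; exact hfr.ne_int 0 (by rw [← h]; norm_num)
    · exact Int.fract_lt_one _
  · exact hfr

variable {α : ℝ} (hirr : Irrational α) (hmem : α ∈ Set.Ioo (0:ℝ) 1)

include hirr hmem

lemma xs_mem (k : ℕ) : xs α k ∈ Set.Ioo (0:ℝ) 1 ∧ Irrational (xs α k) := by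
  induction k with
  | zero => exact ⟨hmem, hirr⟩
  | succ n ih => rw [xs_succ]; exact gauss_step ih.1 ih.2

lemma xs_pos (k : ℕ) : 0 < xs α k := (xs_mem hirr hmem k).1.1
lemma xs_lt_one (k : ℕ) : xs α k < 1 := (xs_mem hirr hmem k).1.2

lemma inv_xs_gt_one (k : ℕ) : 1 < (xs α k)⁻¹ :=
  (one_lt_inv₀ (xs_pos hirr hmem k)).2 (xs_lt_one hirr hmem k)

lemma aa_ge_one (k : ℕ) : 1 ≤ aa α k := by
  unfold aa
  exact (Nat.one_le_floor_iff _).mpr (le_of_lt (inv_xs_gt_one hirr hmem k))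

lemma aa_le (k : ℕ) : (aa α k : ℝ) ≤ (xs α k)⁻¹ :=
  Nat.floor_le (le_of_lt (by have := xs_pos hirr hmem k; positivity))

lemma lt_aa_add_one (k : ℕ) : (xs α k)⁻¹ < aa α k + 1 := Nat.lt_floor_add_one _

lemma xs_succ_eq (k : ℕ) : xs α (k+1) = (xs α k)⁻¹ - aa α k := by
  rw [xs_succ]
  unfold gaussMap Int.fract aa
  congr 1
  have h0 : (0:ℝ) ≤ (xs α k)⁻¹ := le_of_lt (by have := xs_pos hirr hmem k; positivity)
  exact (natCast_floor_eq_intCast_floor h0).symm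

lemma bb_pos (k : ℕ) : 0 < bb α k := by
  induction k with
  | zero => norm_num [bb_zero]
  | succ n ih => rw [bb_succ]; exact mul_pos ih (xs_pos hirr hmem n)

lemma bb_succ_lt (k : ℕ) : bb α (k+1) < bb α k := by
  rw [bb_succ]
  nlinarith [bb_pos hirr hmem k, xs_pos hirr hmem k, xs_lt_one hirr hmem k]

lemma bb_anti : StrictAnti (bb α) :=
  strictAnti_nat_of_succ_lt (bb_succ_lt hirr hmem)

lemma bb_le_one (k : ℕ) : bb α k ≤ 1 := by
  induction k with
  | zero => norm_num [bb_zero]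
  | succ n ih => exact le_trans (le_of_lt (bb_succ_lt hirr hmem n)) ih

lemma q_pos (k : ℕ) : 0 < cfQ α k := by
  induction k using Nat.strong_induction_on with
  | _ k ih =>
    match k with
    | 0 => norm_num [q_zero]
    | 1 => rw [q_one]; exact aa_ge_one hirr hmem 0
    | (n+2) =>
      rw [q_rec]
      have := ih n (by omega)
      positivity

lemma q_mono_succ (k : ℕ) : cfQ α k ≤ cfQ α (k+1) := by
  match k with
  | 0 => rw [q_zero, q_one]; exact aa_ge_one hirr hmem 0
  | (n+1) =>
    rw [q_rec]
    have h1 := aa_ge_one hirr hmem (n+1)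
    have h2 := q_pos hirr hmem (n+1)
    nlinarith

lemma q_mono : Monotone (cfQ α) :=
  monotone_nat_of_le_succ (q_mono_succ hirr hmem)

lemma q_le_succ (k : ℕ) : cfQ α (k+1) ≤ (aa α k + 1) * cfQ α k := by
  match k with
  | 0 => rw [q_one, q_zero]; nlinarith [aa_ge_one hirr hmem 0]
  | (n+1) =>
    rw [q_rec]
    have := q_mono_succ hirr hmem n
    nlinarith [q_pos hirr hmem n]

lemma q_two_step (k : ℕ) : 2 * cfQ α k ≤ cfQ α (k+2) := by
  rw [q_rec]
  have h1 := aa_ge_one hirr hmem (k+1)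
  have h2 := q_mono_succ hirr hmem k
  nlinarith [q_pos hirr hmem k]

lemma q_ge_pow (k : ℕ) : 2^(k/2) ≤ cfQ α k := by
  induction k using Nat.strong_induction_on with
  | _ k ih =>
    match k with
    | 0 => norm_num [q_zero]
    | 1 => rw [q_one]; simpa using aa_ge_one hirr hmem 0
    | (n+2) =>
      have h1 := ih n (by omega)
      have h2 := q_two_step hirr hmem n
      have h3 : (n+2)/2 = n/2 + 1 := by omega
      rw [h3, pow_succ]
      omega

lemma idI (k : ℕ) : (cfQ α (k+1) : ℝ) * bb α (k+1) + (cfQ α k : ℝ) * bb α (k+2) = 1 := by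
  induction k with
  | zero =>
    have hx0 := xs_pos hirr hmem 0
    have hx1 : xs α 1 = (xs α 0)⁻¹ - aa α 0 := xs_succ_eq hirr hmem 0
    have e1 : bb α 1 = xs α 0 := by rw [show (1:ℕ) = 0+1 from rfl, bb_succ, bb_zero, one_mul]
    have e2 : bb α 2 = bb α 1 * xs α 1 := bb_succ α 1
    rw [q_one, q_zero, e2, e1, hx1]
    push_cast
    field_simp
    ring
  | succ n ih =>
    rw [q_rec]
    have hx : xs α (n+1+1) = (xs α (n+1))⁻¹ - aa α (n+1) := xs_succ_eq hirr hmem (n+1)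
    have hpos := xs_pos hirr hmem (n+1)
    have hne : xs α (n+1) ≠ 0 := ne_of_gt hpos
    have hb3 : bb α (n+3) = bb α (n+2) * xs α (n+2) := bb_succ α (n+2)
    have hb2 : bb α (n+2) = bb α (n+1) * xs α (n+1) := bb_succ α (n+1)
    push_cast
    rw [hb3, hb2, hx]
    rw [hb2] at ih
    set u := xs α (n+1)
    set v := xs α (n+2)
    have expand : ((aa α (n+1):ℝ) * ↑(cfQ α (n+1)) + ↑(cfQ α n)) * (bb α (n+1) * u)
        + ↑(cfQ α (n+1)) * (bb α (n+1) * u * (u⁻¹ - ↑(aa α (n+1))))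
        = ((cfQ α (n+1):ℝ)) * (bb α (n+1) * (u * u⁻¹)) + ↑(cfQ α n) * (bb α (n+1) * u) := by
      ring
    rw [expand, mul_inv_cancel₀ hne, mul_one]
    exact ih

lemma q_bb_le_one (k : ℕ) : (cfQ α k : ℝ) * bb α k ≤ 1 := by
  match k with
  | 0 => norm_num [q_zero, bb_zero]
  | (n+1) =>
    have := idI hirr hmem n
    have h1 : 0 < (cfQ α n : ℝ) := by exact_mod_cast q_pos hirr hmem n
    nlinarith [bb_pos hirr hmem (n+2)]

lemma one_le_two_q_bb (k : ℕ) : 1 ≤ 2 * (cfQ α k : ℝ) * bb α k := by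
  match k with
  | 0 => norm_num [q_zero, bb_zero]
  | (n+1) =>
    have hid := idI hirr hmem n
    have h1 : (cfQ α n : ℝ) ≤ cfQ α (n+1) := by exact_mod_cast q_mono_succ hirr hmem n
    have h2 : bb α (n+2) ≤ bb α (n+1) := le_of_lt (bb_succ_lt hirr hmem (n+1))
    have h3 : 0 < (cfQ α n : ℝ) := by exact_mod_cast q_pos hirr hmem n
    have h4 := bb_pos hirr hmem (n+1)
    have h5 := bb_pos hirr hmem (n+2)
    nlinarith

lemma e_eq (k : ℕ) : (cfQ α k : ℝ) * α - (cfP α k : ℝ) = (-1:ℝ)^k * bb α (k+1) := by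
  induction k using Nat.strong_induction_on with
  | _ k ih =>
    match k with
    | 0 =>
      rw [q_zero, p_zero]
      have e1 : bb α 1 = α := by
        rw [show (1:ℕ) = 0+1 from rfl, bb_succ, bb_zero, one_mul, xs_zero]
      rw [e1]; push_cast; ring
    | 1 =>
      rw [q_one, p_one]
      have hx1 : xs α (0+1) = (xs α 0)⁻¹ - aa α 0 := xs_succ_eq hirr hmem 0
      have hx0 : (0:ℝ) < xs α 0 := xs_pos hirr hmem 0
      have hx1' : xs α 1 = α⁻¹ - aa α 0 := by rw [show (1:ℕ)=0+1 from rfl, hx1, xs_zero]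
      have h2 : bb α 2 = bb α 1 * xs α 1 := bb_succ α 1
      have h1 : bb α 1 = α := by rw [show (1:ℕ)=0+1 from rfl, bb_succ, bb_zero, one_mul, xs_zero]
      have hx0' : (0:ℝ) < α := by rw [xs_zero] at hx0; exact hx0
      rw [h2, h1, hx1']
      field_simp
      ring
    | (n+2) =>
      have i1 := ih (n+1) (by omega)
      have i0 := ih n (by omega)
      rw [q_rec, p_rec]
      have hx : xs α (n+1+1) = (xs α (n+1))⁻¹ - aa α (n+1) := xs_succ_eq hirr hmem (n+1)
      have hpos := xs_pos hirr hmem (n+1)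
      have hb3 : bb α (n+3) = bb α (n+2) * xs α (n+2) := bb_succ α (n+2)
      have hb2 : bb α (n+2) = bb α (n+1) * xs α (n+1) := bb_succ α (n+1)
      push_cast
      rw [show ((aa α (n+1) : ℝ) * (cfQ α (n+1)) + (cfQ α n)) * α
          - ((aa α (n+1) : ℝ) * (cfP α (n+1)) + (cfP α n))
          = (aa α (n+1) : ℝ) * ((cfQ α (n+1) : ℝ) * α - cfP α (n+1))
            + ((cfQ α n : ℝ) * α - cfP α n) from by ring]
      rw [i1, i0, hb3, hb2, hx]
      field_simp
      ring

omit hirr hmem in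
lemma det (k : ℕ) : (cfP α (k+1) : ℤ) * (cfQ α k : ℤ) - (cfP α k : ℤ) * (cfQ α (k+1) : ℤ) = (-1)^k := by
  induction k with
  | zero => simp [p_one, q_zero, p_zero, q_one]
  | succ n ih =>
    rw [q_rec, p_rec]
    push_cast
    push_cast at ih
    ring_nf
    ring_nf at ih
    linarith [ih]

omit hirr hmem in
lemma keyalg (P0 P1 Q0 Q1 m z : ℤ) (k : ℕ) (hdet : P1*Q0 - P0*Q1 = (-1)^k) :
    ((-1)^k * (m*P1 - z*Q1)) * Q0 + ((-1)^(k+1) * (m*P0 - z*Q0)) * Q1 = m ∧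
    ((-1)^k * (m*P1 - z*Q1)) * P0 + ((-1)^(k+1) * (m*P0 - z*Q0)) * P1 = z := by
  have h2 : ((-1:ℤ)^k)*((-1:ℤ)^k) = 1 := by
    rw [← pow_add]
    exact Even.neg_one_pow ⟨k, rfl⟩
  constructor
  · linear_combination ((-1:ℤ)^k * m) * hdet + m * h2
  · linear_combination ((-1:ℤ)^k * z) * hdet + z * h2

lemma bestapprox (k : ℕ) (m : ℕ) (hm1 : 1 ≤ m) (hmq : m < cfQ α (k+1)) (z : ℤ) :
    bb α (k+1) ≤ |(m:ℝ) * α - z| := by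
  obtain ⟨hm', hz'⟩ := keyalg (cfP α k) (cfP α (k+1)) (cfQ α k) (cfQ α (k+1)) m z k (det k)
  set u : ℤ := ((-1)^k * ((m:ℤ)*(cfP α (k+1)) - z*(cfQ α (k+1)))) with hu
  set v : ℤ := ((-1)^(k+1) * ((m:ℤ)*(cfP α k) - z*(cfQ α k))) with hv
  have hmR : (u:ℝ) * (cfQ α k : ℝ) + (v:ℝ) * (cfQ α (k+1) : ℝ) = m := by exact_mod_cast hm'
  have hzR : (u:ℝ) * (cfP α k : ℝ) + (v:ℝ) * (cfP α (k+1) : ℝ) = z := by exact_mod_cast hz'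
  have e0 := e_eq hirr hmem k
  have e1 := e_eq hirr hmem (k+1)
  have hkey : (m:ℝ) * α - z
      = (u:ℝ) * ((cfQ α k : ℝ) * α - cfP α k) + (v:ℝ) * ((cfQ α (k+1) : ℝ) * α - cfP α (k+1)) := by
    linear_combination hzR - α * hmR
  rw [e0, e1] at hkey
  have hb1 := bb_pos hirr hmem (k+1)
  have hb2 := bb_pos hirr hmem (k+2)
  have hQ0 : (0:ℤ) < cfQ α k := by exact_mod_cast q_pos hirr hmem k
  have hQ1 : (0:ℤ) < cfQ α (k+1) := by exact_mod_cast q_pos hirr hmem (k+1)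
  have hmZ : (0:ℤ) < (m:ℤ) := by exact_mod_cast hm1
  have hmQ1 : (m:ℤ) < cfQ α (k+1) := by exact_mod_cast hmq
  have habs : |(-1:ℝ)^k| = 1 := by
    rw [abs_pow, abs_neg, abs_one, one_pow]
  have hw : (m:ℝ)*α - z = (-1:ℝ)^k * ((u:ℝ) * bb α (k+1) - (v:ℝ) * bb α (k+2)) := by
    rw [hkey]; ring
  rw [hw, abs_mul, habs, one_mul]
  -- now case analysis on u and v
  rcases lt_trichotomy v 0 with hvn | hv0 | hvp
  · rcases lt_trichotomy u 0 with hun | hu0 | hup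
    · -- u < 0, v < 0 : m < 0, contradiction
      exfalso
      nlinarith [hm', hQ0, hQ1, hmZ]
    · -- u = 0 : m = v * Q1 with v < 0 : contradiction
      exfalso
      rw [hu0] at hm'
      nlinarith [hm', hQ0, hQ1, hmZ]
    · -- u > 0, v < 0 : w = u*bb1 - v*bb2 ≥ bb1 + bb2 > 0
      have hu1 : (1:ℝ) ≤ (u:ℝ) := by exact_mod_cast hup
      have hv1 : (v:ℝ) ≤ -1 := by
        have : v ≤ -1 := by omega
        exact_mod_cast this
      rw [abs_of_pos (by nlinarith)]
      nlinarith
  · -- v = 0 : m = u*Q0, u ≥ 1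
    rw [hv0] at hm'
    have hu1 : (0:ℤ) < u := by
      by_contra hcon
      push_neg at hcon
      nlinarith [hm', hQ0, hmZ]
    have hu1' : (1:ℝ) ≤ (u:ℝ) := by exact_mod_cast hu1
    rw [hv0]
    push_cast
    rw [mul_comm (0:ℝ), mul_zero, sub_zero, abs_of_pos (by nlinarith)]
    nlinarith
  · rcases lt_trichotomy u 0 with hun | hu0 | hup
    · -- u < 0, v > 0 : w ≤ -(bb1+bb2)
      have hu1 : (u:ℝ) ≤ -1 := by
        have : u ≤ -1 := by omega
        exact_mod_cast this
      have hv1 : (1:ℝ) ≤ (v:ℝ) := by exact_mod_cast hvp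
      rw [abs_of_neg (by nlinarith)]
      nlinarith
    · -- u = 0, v > 0 : m = v*Q1 ≥ Q1 contradiction
      exfalso
      nlinarith [hm', hQ0, hQ1, hmZ, hmQ1]
    · -- u > 0, v > 0 : m ≥ Q0 + Q1 > m contradiction
      exfalso
      nlinarith [hm', hQ0, hQ1, hmQ1]

lemma best_nd (k m : ℕ) (hm1 : 1 ≤ m) (hmq : m < cfQ α k) : bb α k ≤ nd ((m:ℝ)*α) := by
  match k with
  | 0 => rw [q_zero] at hmq; omega
  | (j+1) => exact bestapprox hirr hmem j m hm1 hmq (round ((m:ℝ)*α))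

omit hirr hmem in
lemma nd_fract_diff (m m' : ℕ) :
    nd ((m:ℝ)*α - (m':ℝ)*α) ≤ |Int.fract ((m:ℝ)*α) - Int.fract ((m':ℝ)*α)| := by
  have h : Int.fract ((m:ℝ)*α) - Int.fract ((m':ℝ)*α)
      = ((m:ℝ)*α - (m':ℝ)*α) - ((⌊(m:ℝ)*α⌋ - ⌊(m':ℝ)*α⌋ : ℤ) : ℝ) := by
    unfold Int.fract; push_cast; ring
  rw [h]
  exact nd_le _ _

omit hirr hmem in
lemma arc (V : Finset ℕ) (c δ : ℝ) (hδ : 0 < δ)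
    (hsep : ∀ m ∈ V, ∀ m' ∈ V, m ≠ m' → δ ≤ nd ((m:ℝ)*α - (m':ℝ)*α))
    (hval : ∀ m ∈ V, c ≤ nd ((m:ℝ)*α) ∧ nd ((m:ℝ)*α) < c + δ) : V.card ≤ 2 := by
  classical
  have key : ∀ m ∈ V, ∀ m' ∈ V,
      ((Int.fract ((m:ℝ)*α) < c + δ) ↔ (Int.fract ((m':ℝ)*α) < c + δ)) → m = m' := by
    intro m hm m' hm' hside
    by_contra hne
    have hs := hsep m hm m' hm' hne
    have hd := nd_fract_diff (α := α) m m'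
    have hbound : ∀ n ∈ V, Int.fract ((n:ℝ)*α) < c + δ →
        c ≤ Int.fract ((n:ℝ)*α) ∧ Int.fract ((n:ℝ)*α) < c + δ := by
      intro n hn hlt
      exact ⟨le_trans (hval n hn).1 (nd_le_fract _), hlt⟩
    have hbound2 : ∀ n ∈ V, ¬(Int.fract ((n:ℝ)*α) < c + δ) →
        1 - (c + δ) < Int.fract ((n:ℝ)*α) ∧ Int.fract ((n:ℝ)*α) ≤ 1 - c := by
      intro n hn hlt
      push_neg at hlt
      have h1 := (hval n hn).1
      have h2 := (hval n hn).2
      have h3 : nd ((n:ℝ)*α) ≠ Int.fract ((n:ℝ)*α) := by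
        intro hcon; rw [hcon] at h2; linarith
      have h4 : nd ((n:ℝ)*α) = 1 - Int.fract ((n:ℝ)*α) := by
        rcases nd_eq_fract_or ((n:ℝ)*α) with h | h
        · exact absurd h h3
        · exact h
      rw [h4] at h1 h2
      constructor <;> linarith
    rcases em (Int.fract ((m:ℝ)*α) < c + δ) with hP | hP
    · have hP' := hside.mp hP
      have b1 := hbound m hm hP
      have b2 := hbound m' hm' hP'
      have : |Int.fract ((m:ℝ)*α) - Int.fract ((m':ℝ)*α)| < δ := by
        rw [abs_lt]; constructor <;> linarith [b1.1, b1.2, b2.1, b2.2]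
      linarith
    · have hP' : ¬(Int.fract ((m':ℝ)*α) < c + δ) := fun h => hP (hside.mpr h)
      have b1 := hbound2 m hm hP
      have b2 := hbound2 m' hm' hP'
      have : |Int.fract ((m:ℝ)*α) - Int.fract ((m':ℝ)*α)| < δ := by
        rw [abs_lt]; constructor <;> linarith [b1.1, b1.2, b2.1, b2.2]
      linarith
  have hinj : Set.InjOn (fun m : ℕ => decide (Int.fract ((m:ℝ)*α) < c + δ)) V := by
    intro m hm m' hm' heq
    have heq' : decide (Int.fract ((m:ℝ)*α) < c + δ) = decide (Int.fract ((m':ℝ)*α) < c + δ) := heq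
    apply key m hm m' hm'
    constructor <;> intro h
    · have h2 : decide (Int.fract ((m:ℝ)*α) < c + δ) = true := decide_eq_true h
      rw [heq'] at h2
      exact of_decide_eq_true h2
    · have h2 : decide (Int.fract ((m':ℝ)*α) < c + δ) = true := decide_eq_true h
      rw [← heq'] at h2
      exact of_decide_eq_true h2
  calc V.card ≤ (Finset.univ : Finset Bool).card :=
        Finset.card_le_card_of_injOn _ (fun _ _ => Finset.mem_univ _) hinj
    _ = 2 := by simp

omit hirr hmem in
lemma log_cast_mono {a b : ℕ} (h : a ≤ b) : Real.log a ≤ Real.log b := by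
  rcases Nat.eq_zero_or_pos a with h0 | h0
  · rw [h0]
    simp only [Nat.cast_zero, Real.log_zero]
    exact Real.log_natCast_nonneg b
  · exact Real.log_le_log (by exact_mod_cast h0) (by exact_mod_cast h)

omit hirr hmem in
lemma harm (J : Finset ℕ) (hJ : ∀ t ∈ J, 1 ≤ t) : ∑ t ∈ J, (1:ℝ)/t ≤ 1 + Real.log J.card := by
  generalize hn : J.card = n
  induction n generalizing J with
  | zero =>
    have : J = ∅ := Finset.card_eq_zero.mp hn
    simp [this]
  | succ n ih =>
    have hne : J.Nonempty := Finset.card_pos.mp (by omega)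
    set t0 := J.max' hne with ht0
    have ht0J : t0 ∈ J := J.max'_mem hne
    have hsub : J ⊆ Finset.Icc 1 t0 := by
      intro t ht
      exact Finset.mem_Icc.mpr ⟨hJ t ht, J.le_max' t ht⟩
    have hcard : n + 1 ≤ t0 := by
      have h := Finset.card_le_card hsub
      rw [hn] at h
      simpa using h
    have herase : (J.erase t0).card = n := by
      rw [Finset.card_erase_of_mem ht0J, hn]
      omega
    have hIH := ih (J.erase t0) (fun t ht => hJ t (Finset.mem_of_mem_erase ht)) herase
    rw [← Finset.sum_erase_add J _ ht0J]
    have hlast : (1:ℝ)/t0 ≤ 1/(n+1) := by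
      apply one_div_le_one_div_of_le
      · positivity
      · exact_mod_cast hcard
    rcases Nat.eq_zero_or_pos n with h0 | h0
    · subst h0
      have hemp : J.erase t0 = ∅ := Finset.card_eq_zero.mp herase
      rw [hemp]
      simp only [Finset.sum_empty, zero_add]
      have h1 : (1:ℝ)/t0 ≤ 1 := by
        apply le_trans hlast
        norm_num
      have h2 : (0:ℝ) ≤ Real.log ((0:ℕ)+1) := by norm_num
      push_cast
      push_cast at h1
      have h3 : Real.log 1 = 0 := Real.log_one
      linarith
    · have hlog : Real.log n + 1/((n:ℝ)+1) ≤ Real.log ((n:ℝ)+1) := by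
        have hx : (0:ℝ) < (n:ℝ)/((n:ℝ)+1) := by positivity
        have hd := Real.log_le_sub_one_of_pos hx
        rw [Real.log_div (by positivity) (by positivity)] at hd
        have hh : (n:ℝ)/((n:ℝ)+1) - 1 = -(1/((n:ℝ)+1)) := by field_simp; ring
        rw [hh] at hd
        linarith
      have hlog0 : (0:ℝ) ≤ Real.log n := Real.log_natCast_nonneg n
      push_cast
      push_cast at hIH hlast
      linarith


omit hirr hmem in
lemma layer_sum (V : Finset ℕ) (δ γ : ℝ) (hδ : 0 < δ) (hγ : 0 < γ) (R : ℕ)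
    (hvals : ∀ m ∈ V, γ ≤ nd ((m:ℝ)*α))
    (hfib : ∀ j : ℕ, (V.filter (fun m : ℕ => (j:ℝ)*δ ≤ nd ((m:ℝ)*α) ∧ nd ((m:ℝ)*α) < ((j:ℝ)+1)*δ)).card ≤ R) :
    ∑ m ∈ V, 1 / nd ((m:ℝ)*α) ≤ R/γ + (R/δ) * (1 + Real.log V.card) := by
  classical
  have hnonnegR : (0:ℝ) ≤ R := by positivity
  have hlogV : (0:ℝ) ≤ 1 + Real.log V.card := by
    rcases Nat.eq_zero_or_pos V.card with h | h
    · simp [h]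
    · have : (0:ℝ) ≤ Real.log V.card := Real.log_natCast_nonneg _
      linarith
  rw [← Finset.sum_filter_add_sum_filter_not V (fun m : ℕ => nd ((m:ℝ)*α) < δ)]
  have part0 : ∑ m ∈ V.filter (fun m : ℕ => nd ((m:ℝ)*α) < δ), 1 / nd ((m:ℝ)*α) ≤ R/γ := by
    have hsub : V.filter (fun m : ℕ => nd ((m:ℝ)*α) < δ)
        ⊆ V.filter (fun m : ℕ => ((0:ℕ):ℝ)*δ ≤ nd ((m:ℝ)*α) ∧ nd ((m:ℝ)*α) < (((0:ℕ):ℝ)+1)*δ) := by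
      intro m hm
      rw [Finset.mem_filter] at *
      refine ⟨hm.1, ?_, ?_⟩
      · simpa using nd_nonneg ((m:ℝ)*α)
      · simpa using hm.2
    have hcard : (V.filter (fun m : ℕ => nd ((m:ℝ)*α) < δ)).card ≤ R :=
      le_trans (Finset.card_le_card hsub) (hfib 0)
    calc ∑ m ∈ V.filter (fun m : ℕ => nd ((m:ℝ)*α) < δ), 1 / nd ((m:ℝ)*α)
        ≤ ∑ m ∈ V.filter (fun m : ℕ => nd ((m:ℝ)*α) < δ), 1/γ := by
          apply Finset.sum_le_sum
          intro m hm
          rw [Finset.mem_filter] at hm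
          exact one_div_le_one_div_of_le hγ (hvals m hm.1)
      _ = (V.filter (fun m : ℕ => nd ((m:ℝ)*α) < δ)).card * (1/γ) := by
          rw [Finset.sum_const, nsmul_eq_mul]
      _ ≤ R * (1/γ) := by
          apply mul_le_mul_of_nonneg_right _ (by positivity)
          exact_mod_cast hcard
      _ = R/γ := by ring
  have part1 : ∑ m ∈ V.filter (fun m : ℕ => ¬ nd ((m:ℝ)*α) < δ), 1 / nd ((m:ℝ)*α)
      ≤ (R/δ) * (1 + Real.log V.card) := by
    set V1 := V.filter (fun m : ℕ => ¬ nd ((m:ℝ)*α) < δ) with hV1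
    have hmemV1 : ∀ m ∈ V1, δ ≤ nd ((m:ℝ)*α) := by
      intro m hm
      rw [hV1, Finset.mem_filter] at hm
      linarith [not_lt.mp hm.2]
    have hjf : ∀ m ∈ V1, ((⌊nd ((m:ℝ)*α)/δ⌋₊ : ℝ)) * δ ≤ nd ((m:ℝ)*α) := by
      intro m hm
      have h0 : (0:ℝ) ≤ nd ((m:ℝ)*α)/δ := by
        apply div_nonneg (nd_nonneg _) (le_of_lt hδ)
      have := Nat.floor_le h0
      calc ((⌊nd ((m:ℝ)*α)/δ⌋₊ : ℝ)) * δ ≤ (nd ((m:ℝ)*α)/δ) * δ :=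
            mul_le_mul_of_nonneg_right this (le_of_lt hδ)
        _ = nd ((m:ℝ)*α) := by field_simp
    have hj1 : ∀ m ∈ V1, 1 ≤ ⌊nd ((m:ℝ)*α)/δ⌋₊ := by
      intro m hm
      rw [Nat.one_le_floor_iff]
      rw [le_div_iff₀ hδ, one_mul]
      exact hmemV1 m hm
    have step1 : ∑ m ∈ V1, 1 / nd ((m:ℝ)*α) ≤ ∑ m ∈ V1, (1/δ) * (1/(⌊nd ((m:ℝ)*α)/δ⌋₊ : ℝ)) := by
      apply Finset.sum_le_sum
      intro m hm
      have hj := hjf m hm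
      have hjpos : (0:ℝ) < (⌊nd ((m:ℝ)*α)/δ⌋₊ : ℝ) := by
        have := hj1 m hm
        exact_mod_cast Nat.lt_of_lt_of_le Nat.zero_lt_one this
      have hndpos : (0:ℝ) < nd ((m:ℝ)*α) := lt_of_lt_of_le hδ (hmemV1 m hm)
      calc 1 / nd ((m:ℝ)*α) ≤ 1/((⌊nd ((m:ℝ)*α)/δ⌋₊ : ℝ) * δ) :=
            one_div_le_one_div_of_le (by positivity) hj
        _ = (1/δ) * (1/(⌊nd ((m:ℝ)*α)/δ⌋₊ : ℝ)) := by
            rw [div_mul_div_comm, one_mul, mul_comm]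
    have step2 : ∑ m ∈ V1, (1/(⌊nd ((m:ℝ)*α)/δ⌋₊ : ℝ))
        ≤ R * (1 + Real.log V.card) := by
      rw [Finset.sum_comp (fun t : ℕ => (1/(t:ℝ))) (fun m : ℕ => ⌊nd ((m:ℝ)*α)/δ⌋₊)]
      have hfib' : ∀ t ∈ V1.image (fun m : ℕ => ⌊nd ((m:ℝ)*α)/δ⌋₊),
          ((V1.filter (fun m : ℕ => ⌊nd ((m:ℝ)*α)/δ⌋₊ = t)).card : ℝ) ≤ R := by
        intro t ht
        have hsub : V1.filter (fun m : ℕ => ⌊nd ((m:ℝ)*α)/δ⌋₊ = t)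
            ⊆ V.filter (fun m : ℕ => (t:ℝ)*δ ≤ nd ((m:ℝ)*α) ∧ nd ((m:ℝ)*α) < ((t:ℝ)+1)*δ) := by
          intro m hm
          rw [Finset.mem_filter] at hm
          have hmV : m ∈ V := by
            have := hm.1
            rw [hV1, Finset.mem_filter] at this
            exact this.1
          rw [Finset.mem_filter]
          refine ⟨hmV, ?_, ?_⟩
          · rw [← hm.2]
            exact hjf m hm.1
          · have h0 : (0:ℝ) ≤ nd ((m:ℝ)*α)/δ := div_nonneg (nd_nonneg _) (le_of_lt hδ)
            have := Nat.lt_floor_add_one (nd ((m:ℝ)*α)/δ)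
            rw [hm.2] at this
            calc nd ((m:ℝ)*α) = (nd ((m:ℝ)*α)/δ) * δ := by field_simp
              _ < ((t:ℝ)+1)*δ := by
                apply mul_lt_mul_of_pos_right _ hδ
                exact_mod_cast this
        calc ((V1.filter (fun m : ℕ => ⌊nd ((m:ℝ)*α)/δ⌋₊ = t)).card : ℝ)
            ≤ ((V.filter (fun m : ℕ => (t:ℝ)*δ ≤ nd ((m:ℝ)*α) ∧ nd ((m:ℝ)*α) < ((t:ℝ)+1)*δ)).card : ℝ) := by
              exact_mod_cast Finset.card_le_card hsub
          _ ≤ R := by exact_mod_cast hfib t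
      set J := V1.image (fun m : ℕ => ⌊nd ((m:ℝ)*α)/δ⌋₊) with hJ
      have hJ1 : ∀ t ∈ J, 1 ≤ t := by
        intro t ht
        rw [hJ, Finset.mem_image] at ht
        obtain ⟨m, hm, hmt⟩ := ht
        rw [← hmt]
        exact hj1 m hm
      have hharm : ∑ t ∈ J, (1:ℝ)/t ≤ 1 + Real.log J.card := harm J hJ1
      have hJcard : Real.log J.card ≤ Real.log V.card := by
        apply log_cast_mono
        calc J.card ≤ V1.card := Finset.card_image_le
          _ ≤ V.card := Finset.card_le_card (Finset.filter_subset _ _)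
      have hterm : ∀ t ∈ J, ((V1.filter (fun m : ℕ => ⌊nd ((m:ℝ)*α)/δ⌋₊ = t)).card : ℝ) • (1/(t:ℝ))
          ≤ (R:ℝ) * (1/(t:ℝ)) := by
        intro t ht
        rw [smul_eq_mul]
        apply mul_le_mul_of_nonneg_right (hfib' t ht)
        positivity
      calc ∑ t ∈ J, (V1.filter (fun m : ℕ => ⌊nd ((m:ℝ)*α)/δ⌋₊ = t)).card • (1/(t:ℝ))
          ≤ ∑ t ∈ J, (R:ℝ) * (1/(t:ℝ)) := by
            apply Finset.sum_le_sum
            intro t ht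
            rw [nsmul_eq_mul]
            exact hterm t ht
        _ = R * ∑ t ∈ J, (1:ℝ)/t := by rw [Finset.mul_sum]
        _ ≤ R * (1 + Real.log J.card) := by
            apply mul_le_mul_of_nonneg_left hharm hnonnegR
        _ ≤ R * (1 + Real.log V.card) := by
            apply mul_le_mul_of_nonneg_left _ hnonnegR
            linarith
    calc ∑ m ∈ V1, 1 / nd ((m:ℝ)*α)
        ≤ ∑ m ∈ V1, (1/δ) * (1/(⌊nd ((m:ℝ)*α)/δ⌋₊ : ℝ)) := step1
      _ = (1/δ) * ∑ m ∈ V1, (1/(⌊nd ((m:ℝ)*α)/δ⌋₊ : ℝ)) := by rw [Finset.mul_sum]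
      _ ≤ (1/δ) * (R * (1 + Real.log V.card)) := by
          apply mul_le_mul_of_nonneg_left step2 (by positivity)
      _ = (R/δ) * (1 + Real.log V.card) := by ring
  linarith

lemma sep_nd (kk : ℕ) (m m' : ℕ) (hne : m ≠ m') (h1 : m < m' + cfQ α kk)
    (h2 : m' < m + cfQ α kk) : bb α kk ≤ nd ((m:ℝ)*α - (m':ℝ)*α) := by
  rcases lt_or_gt_of_ne hne with hlt | hlt
  · have hr : (m:ℝ)*α - (m':ℝ)*α = -(((m' - m:ℕ):ℝ)*α) := by
      push_cast [Nat.cast_sub (le_of_lt hlt)]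
      ring
    rw [hr, nd_neg]
    exact best_nd hirr hmem kk (m' - m) (by omega) (by omega)
  · have hr : (m:ℝ)*α - (m':ℝ)*α = ((m - m':ℕ):ℝ)*α := by
      push_cast [Nat.cast_sub (le_of_lt hlt)]
      ring
    rw [hr]
    exact best_nd hirr hmem kk (m - m') (by omega) (by omega)

lemma q_succ_ge (k : ℕ) : k + 1 ≤ cfQ α (k+1) := by
  induction k with
  | zero => simpa [q_one] using aa_ge_one hirr hmem 0
  | succ n ih =>
    rw [q_rec]
    have h1 := aa_ge_one hirr hmem (n+1)
    have h2 := q_pos hirr hmem n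
    nlinarith

lemma k_le_qk (k : ℕ) : k ≤ cfQ α k := by
  match k with
  | 0 => omega
  | (n+1) => exact q_succ_ge hirr hmem n

lemma q_add_le (k : ℕ) : cfQ α (k+1) + cfQ α k ≤ cfQ α (k+2) := by
  rw [q_rec]
  nlinarith [aa_ge_one hirr hmem (k+1), q_pos hirr hmem (k+1)]

noncomputable def KK (α : ℝ) (M : ℕ) : ℕ := Nat.findGreatest (fun k => cfQ α k ≤ M) M

lemma qK_le {M : ℕ} (hM : 1 ≤ M) : cfQ α (KK α M) ≤ M := by
  have h0 : cfQ α 0 ≤ M := by simpa [q_zero] using hM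
  exact Nat.findGreatest_spec (P := fun k => cfQ α k ≤ M) (Nat.zero_le M) h0

lemma K_ge {M : ℕ} (k : ℕ) (h : cfQ α k ≤ M) : k ≤ KK α M :=
  Nat.le_findGreatest (P := fun k => cfQ α k ≤ M) (le_trans (k_le_qk hirr hmem k) h) h

lemma qK1_gt {M : ℕ} (hM : 1 ≤ M) : M < cfQ α (KK α M + 1) := by
  by_contra hcon
  push_neg at hcon
  have h1 : KK α M + 1 ≤ KK α M := K_ge hirr hmem (KK α M + 1) hcon
  omega

lemma sum_q_le (k : ℕ) : (∑ j ∈ Finset.Icc 1 k, (cfQ α j : ℝ)) + 1 ≤ (cfQ α k : ℝ) + (cfQ α (k+1) : ℝ) := by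
  induction k with
  | zero =>
    have h0 : Finset.Icc 1 0 = (∅ : Finset ℕ) := rfl
    rw [h0, Finset.sum_empty, q_zero]
    have h1 : (1:ℝ) ≤ cfQ α 1 := by exact_mod_cast q_pos hirr hmem 1
    push_cast
    linarith
  | succ n ih =>
    rw [Finset.sum_Icc_succ_top (by omega)]
    have h1 : (cfQ α (n+1) : ℝ) + (cfQ α n : ℝ) ≤ (cfQ α (n+2) : ℝ) := by
      exact_mod_cast q_add_le hirr hmem n
    linarith

lemma sum_q_le3 (k : ℕ) : (∑ j ∈ Finset.Icc 1 k, (cfQ α j : ℝ)) ≤ 3 * (cfQ α k : ℝ) := by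
  match k with
  | 0 =>
    simp [q_zero]
  | (n+1) =>
    rw [Finset.sum_Icc_succ_top (by omega)]
    have h1 := sum_q_le hirr hmem n
    have h2 : (cfQ α n : ℝ) ≤ (cfQ α (n+1) : ℝ) := by exact_mod_cast q_mono_succ hirr hmem n
    linarith

lemma two_div_bb_le (k : ℕ) : 2 / bb α k ≤ 4 * (cfQ α k : ℝ) := by
  have h1 := one_le_two_q_bb hirr hmem k
  have h2 := bb_pos hirr hmem k
  rw [div_le_iff₀ h2]
  nlinarith

lemma cover_card (M : ℕ) (hM : 1 ≤ M) (V : Finset ℕ)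
    (hV : V ⊆ Finset.Ico (cfQ α (KK α M)) (M+1)) (c : ℝ)
    (hval : ∀ m ∈ V, c ≤ nd ((m:ℝ)*α) ∧ nd ((m:ℝ)*α) < c + bb α (KK α M)) :
    V.card ≤ 2 * (M / cfQ α (KK α M)) := by
  classical
  set K := KK α M with hK
  set Q := cfQ α K with hQdef
  set jmax := M / Q with hjm
  have hQpos : 0 < Q := q_pos hirr hmem K
  have hbbpos : 0 < bb α K := bb_pos hirr hmem K
  have hcov : V ⊆ (Finset.range jmax).biUnion
      (fun i => V.filter (fun m : ℕ => (i+1)*Q ≤ m ∧ m < (i+2)*Q)) := by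
    intro m hm
    have hmIco := hV hm
    rw [Finset.mem_Ico] at hmIco
    set d := m / Q with hd
    have hd1 : 1 ≤ d := (Nat.one_le_div_iff hQpos).mpr hmIco.1
    have hd2 : d ≤ jmax := by
      rw [hd, hjm]
      exact Nat.div_le_div_right (by omega)
    have hdm : d * Q ≤ m := Nat.div_mul_le_self m Q
    have hmod := Nat.div_add_mod m Q
    have hmlt : m % Q < Q := Nat.mod_lt m hQpos
    have hdm2 : m < (d+1) * Q := by
      calc m = Q * d + m % Q := by rw [hd]; omega
        _ < Q * d + Q := by omega
        _ = (d+1) * Q := by ring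
    rw [Finset.mem_biUnion]
    refine ⟨d - 1, Finset.mem_range.mpr (by omega), ?_⟩
    rw [Finset.mem_filter]
    have hd1' : d - 1 + 1 = d := by omega
    refine ⟨hm, ?_, ?_⟩
    · rw [hd1']; exact hdm
    · rw [show d - 1 + 2 = d + 1 by omega]; exact hdm2
  have hcard := Finset.card_le_card hcov
  have hbU := Finset.card_biUnion_le (s := Finset.range jmax)
      (t := fun i => V.filter (fun m : ℕ => (i+1)*Q ≤ m ∧ m < (i+2)*Q))
  have heach : ∀ i ∈ Finset.range jmax,
      (V.filter (fun m : ℕ => (i+1)*Q ≤ m ∧ m < (i+2)*Q)).card ≤ 2 := by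
    intro i _
    apply arc (V.filter (fun m : ℕ => (i+1)*Q ≤ m ∧ m < (i+2)*Q)) c (bb α K) hbbpos
    · intro m hm m' hm' hne
      rw [Finset.mem_filter] at hm hm'
      apply sep_nd hirr hmem K m m' hne
      · calc m < (i+2)*Q := hm.2.2
          _ = (i+1)*Q + Q := by ring
          _ ≤ m' + Q := by omega
      · calc m' < (i+2)*Q := hm'.2.2
          _ = (i+1)*Q + Q := by ring
          _ ≤ m + Q := by omega
    · intro m hm
      rw [Finset.mem_filter] at hm
      exact hval m hm.1
  calc V.card ≤ _ := hcard
    _ ≤ ∑ i ∈ Finset.range jmax, (V.filter (fun m : ℕ => (i+1)*Q ≤ m ∧ m < (i+2)*Q)).card := hbU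
    _ ≤ ∑ i ∈ Finset.range jmax, 2 := Finset.sum_le_sum heach
    _ = 2 * jmax := by rw [Finset.sum_const, Finset.card_range, smul_eq_mul]; omega

lemma block_sum (k : ℕ) (M : ℕ) (hM : 1 ≤ M) (hq : cfQ α (k+1) ≤ M) :
    ∑ m ∈ Finset.Ico (cfQ α k) (cfQ α (k+1)), 1 / nd ((m:ℝ)*α)
      ≤ 4*(2 + Real.log M) * (cfQ α (k+1) : ℝ) := by
  have hb := bb_pos hirr hmem (k+1)
  have hsum := layer_sum (α := α) (Finset.Ico (cfQ α k) (cfQ α (k+1))) (bb α (k+1)) (bb α (k+1))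
    hb hb 2
    (by
      intro m hm
      rw [Finset.mem_Ico] at hm
      exact best_nd hirr hmem (k+1) m (le_trans (q_pos hirr hmem k) hm.1) hm.2)
    (by
      intro j
      apply arc _ ((j:ℝ) * bb α (k+1)) (bb α (k+1)) hb
      · intro m hm m' hm' hne
        rw [Finset.mem_filter, Finset.mem_Ico] at hm hm'
        apply sep_nd hirr hmem (k+1) m m' hne <;> omega
      · intro m hm
        rw [Finset.mem_filter] at hm
        exact ⟨hm.2.1, by linarith [hm.2.2]⟩)
  have hcard : (Finset.Ico (cfQ α k) (cfQ α (k+1))).card ≤ M := by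
    rw [Nat.card_Ico]
    omega
  have hlog : Real.log ((Finset.Ico (cfQ α k) (cfQ α (k+1))).card) ≤ Real.log M :=
    log_cast_mono hcard
  have hlognn : (0:ℝ) ≤ Real.log ((Finset.Ico (cfQ α k) (cfQ α (k+1))).card) :=
    Real.log_natCast_nonneg _
  have h2bb := two_div_bb_le hirr hmem (k+1)
  have hqpos : (0:ℝ) < (cfQ α (k+1) : ℝ) := by exact_mod_cast q_pos hirr hmem (k+1)
  have hbb' : 0 < 2 / bb α (k+1) := by positivity
  calc ∑ m ∈ Finset.Ico (cfQ α k) (cfQ α (k+1)), 1 / nd ((m:ℝ)*α)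
      ≤ (2:ℕ)/bb α (k+1) + ((2:ℕ)/bb α (k+1))
          * (1 + Real.log ((Finset.Ico (cfQ α k) (cfQ α (k+1))).card)) := hsum
    _ ≤ 4*(cfQ α (k+1):ℝ) + (4*(cfQ α (k+1):ℝ)) * (1 + Real.log M) := by
        push_cast
        have e1 : (1:ℝ) + Real.log ((Finset.Ico (cfQ α k) (cfQ α (k+1))).card) ≤ 1 + Real.log M := by
          linarith
        have e2 : (0:ℝ) ≤ 1 + Real.log ((Finset.Ico (cfQ α k) (cfQ α (k+1))).card) := by linarith
        have := mul_le_mul h2bb e1 e2 (by positivity)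
        linarith
    _ = 4*(2 + Real.log M) * (cfQ α (k+1) : ℝ) := by ring

lemma blocks_bound (M : ℕ) (hM : 1 ≤ M) (k : ℕ) (hq : cfQ α k ≤ M) :
    ∑ m ∈ Finset.Ico 1 (cfQ α k), 1 / nd ((m:ℝ)*α)
      ≤ 4*(2 + Real.log M) * (∑ j ∈ Finset.Icc 1 k, (cfQ α j : ℝ)) := by
  induction k with
  | zero =>
    rw [q_zero]
    simp
  | succ n ih =>
    have hqn : cfQ α n ≤ M := le_trans (q_mono_succ hirr hmem n) hq
    have hIH := ih hqn
    rw [← Finset.sum_Ico_consecutive (fun m : ℕ => 1 / nd ((m:ℝ)*α))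
      (show 1 ≤ cfQ α n from q_pos hirr hmem n) (q_mono_succ hirr hmem n)]
    rw [Finset.sum_Icc_succ_top (show 1 ≤ n+1 by omega)]
    have hblock := block_sum hirr hmem n M hM hq
    push_cast
    push_cast at hIH hblock
    linarith

lemma det_bound (M : ℕ) (hM : 1 ≤ M) :
    S α M ≤ 16*(M:ℝ)*(2 + Real.log M) + 12*((aa α (KK α M) : ℝ) + 1)*(M:ℝ) := by
  classical
  set K := KK α M with hK
  have hqK : cfQ α K ≤ M := qK_le hirr hmem hM
  have hqK1 : M < cfQ α (K + 1) := qK1_gt hirr hmem hM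
  have hQpos : 0 < cfQ α K := q_pos hirr hmem K
  set jmax := M / cfQ α K with hjm
  have hjm1 : 1 ≤ jmax := (Nat.one_le_div_iff hQpos).mpr hqK
  have hjmQ : jmax * cfQ α K ≤ M := Nat.div_mul_le_self M (cfQ α K)
  have hMR : (1:ℝ) ≤ (M:ℝ) := by exact_mod_cast hM
  have hlogM : (0:ℝ) ≤ Real.log M := Real.log_natCast_nonneg M
  have hqKR : (1:ℝ) ≤ (cfQ α K : ℝ) := by exact_mod_cast hQpos
  have htR : (1:ℝ) ≤ (jmax:ℝ) := by exact_mod_cast hjm1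
  have hjmQR : (jmax:ℝ) * (cfQ α K : ℝ) ≤ (M:ℝ) := by exact_mod_cast hjmQ
  -- split the sum
  unfold S
  rw [show Finset.Icc 1 M = Finset.Ico 1 (M+1) from (Finset.Ico_add_one_right_eq_Icc 1 M).symm]
  rw [← Finset.sum_Ico_consecutive (fun m : ℕ => 1 / nd ((m:ℝ)*α))
    (show 1 ≤ cfQ α K from hQpos) (show cfQ α K ≤ M+1 by omega)]
  -- part A
  have hpartA : ∑ m ∈ Finset.Ico 1 (cfQ α K), 1 / nd ((m:ℝ)*α) ≤ 12*(M:ℝ)*(2 + Real.log M) := by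
    have h1 := blocks_bound hirr hmem M hM K hqK
    have h2 := sum_q_le3 hirr hmem K
    have h3 : (cfQ α K : ℝ) ≤ (M:ℝ) := by exact_mod_cast hqK
    have h4 : (0:ℝ) ≤ 4*(2 + Real.log M) := by linarith
    calc ∑ m ∈ Finset.Ico 1 (cfQ α K), 1 / nd ((m:ℝ)*α)
        ≤ 4*(2 + Real.log M) * (∑ j ∈ Finset.Icc 1 K, (cfQ α j : ℝ)) := h1
      _ ≤ 4*(2 + Real.log M) * (3 * (cfQ α K : ℝ)) := by
          apply mul_le_mul_of_nonneg_left h2 h4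
      _ ≤ 4*(2 + Real.log M) * (3 * (M:ℝ)) := by
          apply mul_le_mul_of_nonneg_left (by linarith) h4
      _ = 12*(M:ℝ)*(2 + Real.log M) := by ring
  -- part B
  set B := Finset.Ico (cfQ α K) (M+1) with hB
  have hBsub : ∀ m ∈ B, cfQ α K ≤ m ∧ m < M + 1 := by
    intro m hm
    rw [hB, Finset.mem_Ico] at hm
    exact hm
  have hcardB : B.card ≤ M := by
    rw [hB, Nat.card_Ico]
    omega
  rw [← Finset.sum_filter_add_sum_filter_not B (fun m : ℕ => nd ((m:ℝ)*α) < bb α K)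
    (fun m : ℕ => 1 / nd ((m:ℝ)*α))]
  set Bs := B.filter (fun m : ℕ => nd ((m:ℝ)*α) < bb α K) with hBs
  set Bb := B.filter (fun m : ℕ => ¬ nd ((m:ℝ)*α) < bb α K) with hBb
  have hbbK := bb_pos hirr hmem K
  have hbbK1 := bb_pos hirr hmem (K+1)
  -- small part
  have hsmall : ∑ m ∈ Bs, 1 / nd ((m:ℝ)*α) ≤ 12*((aa α K : ℝ) + 1)*(M:ℝ) := by
    have hcards : Bs.card ≤ 2 * jmax := by
      apply cover_card hirr hmem M hM Bs
        (le_trans (Finset.filter_subset _ _) (by rw [hB]))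
        0
      intro m hm
      rw [hBs, Finset.mem_filter] at hm
      exact ⟨nd_nonneg _, by rw [zero_add]; exact hm.2⟩
    have hsum := layer_sum (α := α) Bs (bb α (K+1)) (bb α (K+1)) hbbK1 hbbK1 2
      (by
        intro m hm
        rw [hBs, Finset.mem_filter] at hm
        have hmB := hBsub m hm.1
        exact best_nd hirr hmem (K+1) m (by omega) (by omega))
      (by
        intro j
        apply arc _ ((j:ℝ) * bb α (K+1)) (bb α (K+1)) hbbK1
        · intro m hm m' hm' hne
          rw [Finset.mem_filter, hBs, Finset.mem_filter] at hm hm'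
          have hmB := hBsub m hm.1.1
          have hmB' := hBsub m' hm'.1.1
          apply sep_nd hirr hmem (K+1) m m' hne <;> omega
        · intro m hm
          rw [Finset.mem_filter] at hm
          exact ⟨hm.2.1, by linarith [hm.2.2]⟩)
    have hlogs : Real.log (Bs.card) ≤ Real.log ((2*jmax : ℕ) : ℝ) := log_cast_mono hcards
    have hlogsnn : (0:ℝ) ≤ Real.log (Bs.card) := Real.log_natCast_nonneg _
    have h2bb := two_div_bb_le hirr hmem (K+1)
    have hq1a : (cfQ α (K+1) : ℝ) ≤ ((aa α K : ℝ) + 1) * (cfQ α K : ℝ) := by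
      exact_mod_cast q_le_succ hirr hmem K
    have hlog2t : Real.log ((2*jmax : ℕ) : ℝ) = Real.log 2 + Real.log (jmax:ℝ) := by
      push_cast
      rw [Real.log_mul (by norm_num) (by positivity)]
    have hlogt : Real.log (jmax:ℝ) ≤ (jmax:ℝ) - 1 := by
      have := Real.log_le_sub_one_of_pos (show (0:ℝ) < (jmax:ℝ) by linarith)
      linarith
    have hlog2 : Real.log 2 ≤ 1 := by
      have := Real.log_le_sub_one_of_pos (show (0:ℝ) < 2 by norm_num)
      linarith
    have hkey : 2 + Real.log ((2*jmax : ℕ) : ℝ) ≤ 3 * (jmax:ℝ) := by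
      rw [hlog2t]
      linarith
    have hknn : (0:ℝ) ≤ 2 + Real.log ((2*jmax : ℕ) : ℝ) := by
      have : (0:ℝ) ≤ Real.log ((2*jmax : ℕ) : ℝ) := Real.log_natCast_nonneg _
      linarith
    have hq1pos : (0:ℝ) < (cfQ α (K+1) : ℝ) := by exact_mod_cast q_pos hirr hmem (K+1)
    have hapos : (0:ℝ) < (aa α K : ℝ) + 1 := by positivity
    calc ∑ m ∈ Bs, 1 / nd ((m:ℝ)*α)
        ≤ (2:ℕ)/bb α (K+1) + ((2:ℕ)/bb α (K+1)) * (1 + Real.log (Bs.card)) := hsum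
      _ = (2/bb α (K+1)) * (2 + Real.log (Bs.card)) := by push_cast; ring
      _ ≤ (2/bb α (K+1)) * (2 + Real.log ((2*jmax : ℕ) : ℝ)) := by
          apply mul_le_mul_of_nonneg_left _ (by positivity)
          push_cast
          push_cast at hlogs
          linarith
      _ ≤ (4*(cfQ α (K+1):ℝ)) * (2 + Real.log ((2*jmax : ℕ) : ℝ)) :=
          mul_le_mul_of_nonneg_right h2bb hknn
      _ ≤ (4*(cfQ α (K+1):ℝ)) * (3 * (jmax:ℝ)) := by
          apply mul_le_mul_of_nonneg_left hkey (by positivity)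
      _ ≤ (4*(((aa α K : ℝ) + 1) * (cfQ α K : ℝ))) * (3 * (jmax:ℝ)) := by
          apply mul_le_mul_of_nonneg_right _ (by positivity)
          linarith
      _ = 12*((aa α K : ℝ) + 1) * ((jmax:ℝ) * (cfQ α K : ℝ)) := by ring
      _ ≤ 12*((aa α K : ℝ) + 1) * (M:ℝ) := by
          apply mul_le_mul_of_nonneg_left hjmQR (by positivity)
  -- big part
  have hbig : ∑ m ∈ Bb, 1 / nd ((m:ℝ)*α) ≤ 4*(M:ℝ)*(2 + Real.log M) := by
    have hsum := layer_sum (α := α) Bb (bb α K) (bb α K) hbbK hbbK (2*jmax)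
      (by
        intro m hm
        rw [hBb, Finset.mem_filter] at hm
        linarith [not_lt.mp hm.2])
      (by
        intro j
        apply cover_card hirr hmem M hM _
          (le_trans (Finset.filter_subset _ _)
            (le_trans (Finset.filter_subset _ _) (by rw [hB])))
          ((j:ℝ) * bb α K)
        intro m hm
        rw [Finset.mem_filter] at hm
        exact ⟨hm.2.1, by linarith [hm.2.2]⟩)
    have hcardb : Bb.card ≤ M := le_trans (Finset.card_le_card (Finset.filter_subset _ _)) hcardB
    have hlogb : Real.log (Bb.card) ≤ Real.log M := log_cast_mono hcardb
    have hlogbnn : (0:ℝ) ≤ Real.log (Bb.card) := Real.log_natCast_nonneg _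
    have h2bbK := two_div_bb_le hirr hmem K
    have h1 : ((2*jmax : ℕ):ℝ)/bb α K ≤ 4*(M:ℝ) := by
      push_cast
      rw [show (2:ℝ)*(jmax:ℝ)/bb α K = (jmax:ℝ) * (2/bb α K) from by ring]
      calc (jmax:ℝ) * (2/bb α K) ≤ (jmax:ℝ) * (4*(cfQ α K:ℝ)) := by
            apply mul_le_mul_of_nonneg_left h2bbK (by positivity)
        _ = 4*((jmax:ℝ)*(cfQ α K:ℝ)) := by ring
        _ ≤ 4*(M:ℝ) := by linarith
    calc ∑ m ∈ Bb, 1 / nd ((m:ℝ)*α)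
        ≤ ((2*jmax : ℕ):ℝ)/bb α K + (((2*jmax : ℕ):ℝ)/bb α K) * (1 + Real.log (Bb.card)) := hsum
      _ ≤ 4*(M:ℝ) + (4*(M:ℝ)) * (1 + Real.log M) := by
          have he : (0:ℝ) ≤ ((2*jmax : ℕ):ℝ)/bb α K := by positivity
          have h2 : (((2*jmax : ℕ):ℝ)/bb α K) * (1 + Real.log (Bb.card))
              ≤ (4*(M:ℝ)) * (1 + Real.log M) :=
            mul_le_mul h1 (by linarith) (by linarith) (by linarith)
          linarith
      _ = 4*(M:ℝ)*(2 + Real.log M) := by ring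
  linarith

-- ================= measure-theoretic part =================

def Sset (k : ℕ) (a b : ℝ) : Set ℝ :=
  {y | y ∈ Set.Ioo (0:ℝ) 1 ∧ Irrational y ∧ gaussMap^[k] y ∈ Set.Ioo a b}

omit hirr hmem in
lemma log_ratio_ge {a b : ℝ} (ha : 0 ≤ a) (hab : a ≤ b) (hb : b ≤ 1) :
    b - a ≤ 2*(Real.log (1+b) - Real.log (1+a)) := by
  have h1 : (0:ℝ) < 1 + a := by linarith
  have h2 : (0:ℝ) < 1 + b := by linarith
  have hlog := Real.log_le_sub_one_of_pos (show (0:ℝ) < (1+a)/(1+b) by positivity)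
  rw [Real.log_div (by linarith) (by linarith)] at hlog
  have h3 : (1+a)/(1+b) - 1 = -((b-a)/(1+b)) := by field_simp; ring
  rw [h3] at hlog
  have h4 : (b-a)/2 ≤ (b-a)/(1+b) := by
    rw [div_le_div_iff₀ (by norm_num) h2]
    nlinarith
  linarith

omit hirr hmem in
lemma Sset_zero_bound (a b : ℝ) (ha : 0 ≤ a) (hab : a ≤ b) (hb : b ≤ 1) :
    volume (Sset 0 a b) ≤ ENNReal.ofReal (2*(Real.log (1+b) - Real.log (1+a))) := by
  have hsub : Sset 0 a b ⊆ Set.Ioo a b := fun y hy => hy.2.2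
  calc volume (Sset 0 a b) ≤ volume (Set.Ioo a b) := measure_mono hsub
    _ = ENNReal.ofReal (b - a) := Real.volume_Ioo
    _ ≤ ENNReal.ofReal (2*(Real.log (1+b) - Real.log (1+a))) :=
        ENNReal.ofReal_le_ofReal (log_ratio_ge ha hab hb)

omit hirr hmem in
lemma Sset_succ_subset (k : ℕ) (a b : ℝ) (ha : 0 ≤ a) (hab : a ≤ b) (hb : b ≤ 1) :
    Sset (k+1) a b ⊆ ⋃ n : ℕ, Sset k (1/((n:ℝ)+1+b)) (1/((n:ℝ)+1+a)) := by
  intro y hy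
  obtain ⟨hy1, hy2, hy3⟩ := hy
  have hz := xs_mem hy2 hy1 k
  have hz1 : 0 < xs y k := hz.1.1
  have hzne : xs y k ≠ 0 := ne_of_gt hz1
  have hsucc : xs y (k+1) = (xs y k)⁻¹ - aa y k := xs_succ_eq hy2 hy1 k
  have hyk : gaussMap^[k+1] y = xs y (k+1) := rfl
  rw [hyk, hsucc] at hy3
  set n' := aa y k with hn'
  have hn'1 : 1 ≤ n' := aa_ge_one hy2 hy1 k
  have hn'R : (1:ℝ) ≤ (n':ℝ) := by exact_mod_cast hn'1
  have hmemz1 : (n':ℝ) + a < (xs y k)⁻¹ := by have := hy3.1; linarith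
  have hmemz2 : (xs y k)⁻¹ < (n':ℝ) + b := by have := hy3.2; linarith
  rw [Set.mem_iUnion]
  refine ⟨n' - 1, ⟨hy1, hy2, ?_⟩⟩
  have hcast : ((n' - 1 : ℕ):ℝ) + 1 = (n':ℝ) := by
    push_cast [Nat.cast_sub hn'1]
    ring
  rw [show gaussMap^[k] y = xs y k from rfl]
  have hpos_na : (0:ℝ) < (n':ℝ) + a := by linarith
  have hpos_nb : (0:ℝ) < (n':ℝ) + b := by linarith
  have hxinv : xs y k * (xs y k)⁻¹ = 1 := mul_inv_cancel₀ hzne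
  constructor
  · rw [hcast, div_lt_iff₀ hpos_nb]
    nlinarith
  · rw [hcast, lt_div_iff₀ hpos_na]
    nlinarith

omit hirr hmem in
lemma Sset_bound : ∀ (k : ℕ) (a b : ℝ), 0 ≤ a → a ≤ b → b ≤ 1 →
    volume (Sset k a b) ≤ ENNReal.ofReal (2*(Real.log (1+b) - Real.log (1+a))) := by
  intro k
  induction k with
  | zero => exact fun a b ha hab hb => Sset_zero_bound a b ha hab hb
  | succ k ih =>
    intro a b ha hab hb
    have hsub := Sset_succ_subset k a b ha hab hb
    apply ENNReal.le_of_forall_pos_le_add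
    intro ε hε _
    obtain ⟨N, hN⟩ := exists_nat_gt (2/(ε:ℝ))
    have hεpos : (0:ℝ) < (ε:ℝ) := hε
    have hNpos : (0:ℝ) < (N:ℝ) + 1 := by positivity
    have hN1 : 1/((N:ℝ)+1) ≤ 1 := by
      rw [div_le_one hNpos]
      have : (0:ℝ) ≤ (N:ℝ) := Nat.cast_nonneg N
      linarith
    have htail_le : 2/((N:ℝ)+1) ≤ (ε:ℝ) := by
      rw [div_le_iff₀ hNpos]
      rw [div_lt_iff₀ hεpos] at hN
      nlinarith [Nat.cast_nonneg (α := ℝ) N]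
    have elog : ∀ x : ℝ, 0 < x → Real.log (1 + 1/x) = Real.log (x+1) - Real.log x := by
      intro x hx
      rw [show (1:ℝ) + 1/x = (x+1)/x by field_simp]
      rw [Real.log_div (by linarith) (ne_of_gt hx)]
    have hsplit : Sset (k+1) a b ⊆
        (⋃ n ∈ Finset.range N, Sset k (1/((n:ℝ)+1+b)) (1/((n:ℝ)+1+a)))
          ∪ Sset k 0 (1/((N:ℝ)+1)) := by
      intro y hy
      have hmem := hsub hy
      rw [Set.mem_iUnion] at hmem
      obtain ⟨n, hn⟩ := hmem
      rcases lt_or_ge n N with hnN | hnN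
      · left
        exact Set.mem_biUnion (Finset.mem_range.mpr hnN) hn
      · right
        obtain ⟨h1, h2, h3⟩ := hn
        have hnnn : (0:ℝ) ≤ (n:ℝ) := Nat.cast_nonneg n
        have hposb : (0:ℝ) < (n:ℝ)+1+b := by linarith
        have hposa : (0:ℝ) < (n:ℝ)+1+a := by linarith
        refine ⟨h1, h2, ?_, ?_⟩
        · have hlo : (0:ℝ) < 1/((n:ℝ)+1+b) := by positivity
          exact lt_trans hlo h3.1
        · have hcomp : 1/((n:ℝ)+1+a) ≤ 1/((N:ℝ)+1) := by
            apply one_div_le_one_div_of_le hNpos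
            have : (N:ℝ) ≤ (n:ℝ) := by exact_mod_cast hnN
            linarith
          exact lt_of_lt_of_le h3.2 hcomp
    have tele : ∀ N' : ℕ, ∑ n ∈ Finset.range N',
        (2*(Real.log (1 + 1/((n:ℝ)+1+a)) - Real.log (1 + 1/((n:ℝ)+1+b))))
        = 2*(Real.log ((N':ℝ)+1+a) - Real.log ((N':ℝ)+1+b))
          - 2*(Real.log (1+a) - Real.log (1+b)) := by
      intro N'
      induction N' with
      | zero =>
        rw [Finset.sum_range_zero]
        rw [show ((0:ℕ):ℝ)+1+a = 1+a by push_cast; ring,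
            show ((0:ℕ):ℝ)+1+b = 1+b by push_cast; ring]
        ring
      | succ n ihn =>
        rw [Finset.sum_range_succ, ihn]
        have hnnn : (0:ℝ) ≤ (n:ℝ) := Nat.cast_nonneg n
        rw [elog _ (by linarith : (0:ℝ) < (n:ℝ)+1+a), elog _ (by linarith : (0:ℝ) < (n:ℝ)+1+b)]
        rw [show ((n+1:ℕ):ℝ)+1+a = ((n:ℝ)+1+a)+1 by push_cast; ring,
            show ((n+1:ℕ):ℝ)+1+b = ((n:ℝ)+1+b)+1 by push_cast; ring]
        ring
    have hsum_le : ∑ n ∈ Finset.range N,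
        (2*(Real.log (1 + 1/((n:ℝ)+1+a)) - Real.log (1 + 1/((n:ℝ)+1+b))))
          ≤ 2*(Real.log (1+b) - Real.log (1+a)) := by
      rw [tele N]
      have h1 : Real.log ((N:ℝ)+1+a) ≤ Real.log ((N:ℝ)+1+b) := by
        apply Real.log_le_log (by linarith)
        linarith
      linarith
    have hnn : ∀ n ∈ Finset.range N,
        (0:ℝ) ≤ 2*(Real.log (1 + 1/((n:ℝ)+1+a)) - Real.log (1 + 1/((n:ℝ)+1+b))) := by
      intro n _
      have hnnn : (0:ℝ) ≤ (n:ℝ) := Nat.cast_nonneg n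
      have hposa : (0:ℝ) < (n:ℝ)+1+a := by linarith
      have hposb : (0:ℝ) < (n:ℝ)+1+b := by linarith
      have hh : 1 + 1/((n:ℝ)+1+b) ≤ 1 + 1/((n:ℝ)+1+a) := by
        have := one_div_le_one_div_of_le hposa (by linarith : (n:ℝ)+1+a ≤ (n:ℝ)+1+b)
        linarith
      have := Real.log_le_log (by positivity) hh
      linarith
    calc volume (Sset (k+1) a b)
        ≤ volume ((⋃ n ∈ Finset.range N, Sset k (1/((n:ℝ)+1+b)) (1/((n:ℝ)+1+a)))
            ∪ Sset k 0 (1/((N:ℝ)+1))) := measure_mono hsplit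
      _ ≤ volume (⋃ n ∈ Finset.range N, Sset k (1/((n:ℝ)+1+b)) (1/((n:ℝ)+1+a)))
            + volume (Sset k 0 (1/((N:ℝ)+1))) := measure_union_le _ _
      _ ≤ (∑ n ∈ Finset.range N, volume (Sset k (1/((n:ℝ)+1+b)) (1/((n:ℝ)+1+a))))
            + volume (Sset k 0 (1/((N:ℝ)+1))) := by
          exact add_le_add_left (measure_biUnion_finset_le _ _) _
      _ ≤ (∑ n ∈ Finset.range N, ENNReal.ofReal
            (2*(Real.log (1 + 1/((n:ℝ)+1+a)) - Real.log (1 + 1/((n:ℝ)+1+b)))))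
            + ENNReal.ofReal ((ε:ℝ)) := by
          apply add_le_add
          · apply Finset.sum_le_sum
            intro n _
            have hnnn : (0:ℝ) ≤ (n:ℝ) := Nat.cast_nonneg n
            have hposa : (0:ℝ) < (n:ℝ)+1+a := by linarith
            have hposb : (0:ℝ) < (n:ℝ)+1+b := by linarith
            exact ih (1/((n:ℝ)+1+b)) (1/((n:ℝ)+1+a)) (by positivity)
              (one_div_le_one_div_of_le hposa (by linarith))
              (by rw [div_le_one hposa]; linarith)
          · calc volume (Sset k 0 (1/((N:ℝ)+1)))
                ≤ ENNReal.ofReal (2*(Real.log (1+1/((N:ℝ)+1)) - Real.log (1+0))) :=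
                  ih 0 (1/((N:ℝ)+1)) le_rfl (by positivity) hN1
              _ ≤ ENNReal.ofReal ((ε:ℝ)) := by
                  apply ENNReal.ofReal_le_ofReal
                  have hlog1 : Real.log (1+(0:ℝ)) = 0 := by norm_num
                  have hle : Real.log (1+1/((N:ℝ)+1)) ≤ 1/((N:ℝ)+1) := by
                    have := Real.log_le_sub_one_of_pos
                      (show (0:ℝ) < 1+1/((N:ℝ)+1) by positivity)
                    linarith
                  rw [hlog1]
                  have h2 : 2*(1/((N:ℝ)+1)) = 2/((N:ℝ)+1) := by ring
                  linarith
      _ ≤ ENNReal.ofReal (2*(Real.log (1+b) - Real.log (1+a))) + ENNReal.ofReal ((ε:ℝ)) := by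
          apply add_le_add_left
          rw [← ENNReal.ofReal_sum_of_nonneg hnn]
          exact ENNReal.ofReal_le_ofReal hsum_le
      _ = ENNReal.ofReal (2*(Real.log (1+b) - Real.log (1+a))) + ε := by
          rw [ENNReal.ofReal_coe_nnreal]

omit hirr hmem in
lemma aa_large_bound (k : ℕ) (c : ℝ) (hc : 1 ≤ c) :
    volume {y | y ∈ Set.Ioo (0:ℝ) 1 ∧ Irrational y ∧ c < (aa y k : ℝ)}
      ≤ ENNReal.ofReal (2/c) := by
  have hcpos : (0:ℝ) < c := by linarith
  have hsub : {y | y ∈ Set.Ioo (0:ℝ) 1 ∧ Irrational y ∧ c < (aa y k : ℝ)}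
      ⊆ Sset k 0 (1/c) := by
    intro y hy
    obtain ⟨h1, h2, h3⟩ := hy
    have hz := xs_mem h2 h1 k
    have hz1 : 0 < xs y k := hz.1.1
    have hle : (aa y k : ℝ) ≤ (xs y k)⁻¹ := aa_le h2 h1 k
    refine ⟨h1, h2, ?_, ?_⟩
    · exact hz1
    · rw [show gaussMap^[k] y = xs y k from rfl]
      rw [lt_div_iff₀ hcpos]
      have hinv : c < (xs y k)⁻¹ := lt_of_lt_of_le h3 hle
      have hxinv : xs y k * (xs y k)⁻¹ = 1 := mul_inv_cancel₀ (ne_of_gt hz1)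
      nlinarith
  calc volume {y | y ∈ Set.Ioo (0:ℝ) 1 ∧ Irrational y ∧ c < (aa y k : ℝ)}
      ≤ volume (Sset k 0 (1/c)) := measure_mono hsub
    _ ≤ ENNReal.ofReal (2*(Real.log (1+1/c) - Real.log (1+0))) :=
        Sset_bound k 0 (1/c) le_rfl (by positivity) (by rw [div_le_one hcpos]; linarith)
    _ ≤ ENNReal.ofReal (2/c) := by
        apply ENNReal.ofReal_le_ofReal
        have hlog1 : Real.log (1+(0:ℝ)) = 0 := by norm_num
        have hle : Real.log (1+1/c) ≤ 1/c := by
          have := Real.log_le_sub_one_of_pos (show (0:ℝ) < 1+1/c by positivity)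
          linarith
        rw [hlog1]
        have h2 : 2*(1/c) = 2/c := by ring
        linarith

omit hirr hmem in
lemma borel_cantelli (u : ℕ → ℝ) (hu : ∀ k, 1 ≤ u k)
    (hsumu : Summable (fun k => 1/u k)) :
    ∀ᵐ y ∂(volume : Measure ℝ), ∀ᶠ k in Filter.atTop,
      ¬(y ∈ Set.Ioo (0:ℝ) 1 ∧ Irrational y ∧ u k < (aa y k : ℝ)) := by
  set A : ℕ → Set ℝ := fun k => {y | y ∈ Set.Ioo (0:ℝ) 1 ∧ Irrational y ∧ u k < (aa y k : ℝ)}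
    with hA
  have hmeas : ∀ k, volume (A k) ≤ ENNReal.ofReal (2/u k) := fun k =>
    aa_large_bound k (u k) (hu k)
  have hsum2 : Summable (fun k => 2/u k) := by
    have : (fun k => 2/u k) = (fun k => 2 * (1/u k)) := by
      funext k; ring
    rw [this]
    exact hsumu.mul_left 2
  have hfin : (∑' k, volume (A k)) ≠ ⊤ := by
    apply ne_top_of_le_ne_top _ (ENNReal.tsum_le_tsum hmeas)
    rw [← ENNReal.ofReal_tsum_of_nonneg (fun k => div_nonneg (by norm_num) (le_trans zero_le_one (hu k))) hsum2]
    exact ENNReal.ofReal_ne_top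
  exact ae_eventually_notMem hfin

lemma K_tendsto : Filter.Tendsto (fun M : ℕ => KK α M) Filter.atTop Filter.atTop := by
  apply Filter.tendsto_atTop.mpr
  intro k
  rw [Filter.eventually_atTop]
  exact ⟨cfQ α k, fun M hM => K_ge hirr hmem k hM⟩

lemma logq_ge (k : ℕ) : ((k/2 : ℕ):ℝ) * Real.log 2 ≤ Real.log (cfQ α k) := by
  have h1 : (2:ℕ)^(k/2) ≤ cfQ α k := q_ge_pow hirr hmem k
  have h2 : ((2:ℝ))^(k/2 : ℕ) ≤ ((cfQ α k : ℕ):ℝ) := by exact_mod_cast h1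
  have h3 := Real.log_le_log (by positivity) h2
  rwa [Real.log_pow] at h3

lemma main_per_alpha (ph : ℝ → ℝ) (phpos : ∀ x, 0 < ph x)
    (phmono : ∀ x y : ℝ, 0 ≤ x → x ≤ y → ph x ≤ ph y)
    (ε : ℝ) (hε : 0 < ε)
    (hbound : ∀ᶠ k in Filter.atTop,
      (aa α k : ℝ) ≤ max 1 ((ε/48) * ((k/8 : ℕ):ℝ) * ph ((k/8 : ℕ):ℝ)))
    (hph_inf : Filter.Tendsto (fun n : ℕ => ph n) Filter.atTop Filter.atTop) :
    ∀ᶠ M in Filter.atTop, S α M ≤ ε * M * Real.log M * ph (Real.log M) := by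
  rw [Filter.eventually_atTop] at hbound
  obtain ⟨k₀, hk₀⟩ := hbound
  obtain ⟨W₀, hW₀⟩ := exists_nat_gt (48/(ε * ph 0))
  have hph0 : 0 < ph 0 := phpos 0
  have hlogtendsto : Filter.Tendsto (fun M : ℕ => Real.log M) Filter.atTop Filter.atTop :=
    Real.tendsto_log_atTop.comp tendsto_natCast_atTop_atTop
  have hph_log : Filter.Tendsto (fun M : ℕ => ph (Real.log M)) Filter.atTop Filter.atTop := by
    apply Filter.tendsto_atTop.mpr
    intro b
    obtain ⟨n₀, hn₀⟩ := Filter.eventually_atTop.mp (Filter.tendsto_atTop.mp hph_inf b)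
    filter_upwards [hlogtendsto.eventually_ge_atTop ((n₀:ℕ):ℝ)] with M hM
    exact le_trans (hn₀ n₀ le_rfl) (phmono _ _ (Nat.cast_nonneg n₀) hM)
  filter_upwards [(K_tendsto hirr hmem).eventually_ge_atTop (max (max k₀ 16) (8*W₀)),
    hph_log.eventually_ge_atTop (64/ε),
    hlogtendsto.eventually_ge_atTop 2,
    Filter.eventually_ge_atTop 1] with M hKbig hph64 hlog2 hM1
  set K := KK α M with hKdef
  set w : ℕ := K/8 with hwdef
  have hK₀ : k₀ ≤ K := le_trans (le_trans (le_max_left _ _) (le_max_left _ _)) hKbig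
  have hK16 : 16 ≤ K := le_trans (le_trans (le_max_right _ _) (le_max_left _ _)) hKbig
  have hKW : 8*W₀ ≤ K := le_trans (le_max_right _ _) hKbig
  have hw : W₀ ≤ w := by
    rw [hwdef]
    rw [Nat.le_div_iff_mul_le (by norm_num)]
    omega
  have hdet := det_bound hirr hmem M hM1
  have haK := hk₀ K hK₀
  have hwR : (W₀:ℝ) ≤ (w:ℝ) := by exact_mod_cast hw
  have hwnn : (0:ℝ) ≤ (w:ℝ) := Nat.cast_nonneg w
  have hphw0 : ph 0 ≤ ph (w:ℝ) := phmono _ _ le_rfl hwnn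
  have hphwpos : 0 < ph (w:ℝ) := phpos _
  have hwph : 48/ε ≤ (w:ℝ) * ph (w:ℝ) := by
    have h1 : 48/(ε * ph 0) < (w:ℝ) := lt_of_lt_of_le hW₀ hwR
    have heq : 48/ε = (48/(ε * ph 0)) * ph 0 := by
      field_simp
    rw [heq]
    calc (48/(ε * ph 0)) * ph 0 ≤ (w:ℝ) * ph 0 :=
          mul_le_mul_of_nonneg_right (le_of_lt h1) (le_of_lt hph0)
      _ ≤ (w:ℝ) * ph (w:ℝ) := mul_le_mul_of_nonneg_left hphw0 hwnn
  have hc2 : (1:ℝ) ≤ (ε/48) * (w:ℝ) * ph ((w:ℕ):ℝ) := by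
    have h1 : (ε/48) * (48/ε) ≤ (ε/48) * ((w:ℝ) * ph (w:ℝ)) :=
      mul_le_mul_of_nonneg_left hwph (by positivity)
    have h2 : (ε/48) * (48/ε) = 1 := by field_simp
    calc (1:ℝ) = (ε/48) * (48/ε) := h2.symm
      _ ≤ (ε/48) * ((w:ℝ) * ph (w:ℝ)) := h1
      _ = (ε/48) * (w:ℝ) * ph ((w:ℕ):ℝ) := by ring
  have haK' : (aa α K : ℝ) ≤ (ε/48) * (w:ℝ) * ph ((w:ℕ):ℝ) := by
    rw [max_eq_right hc2] at haK
    exact haK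
  have h12 : 12*((aa α K : ℝ) + 1) ≤ (ε/2) * ((w:ℝ) * ph ((w:ℕ):ℝ)) := by
    have e1 : (ε/2) * ((w:ℝ) * ph ((w:ℕ):ℝ)) = 24 * ((ε/48) * (w:ℝ) * ph ((w:ℕ):ℝ)) := by ring
    rw [e1]
    linarith
  -- w ≤ log M
  have hqKM : cfQ α K ≤ M := qK_le hirr hmem hM1
  have hlogqK : Real.log (cfQ α K) ≤ Real.log M :=
    log_cast_mono hqKM
  have hlq := logq_ge hirr hmem K
  have hK2cast : ((K:ℝ) - 1)/2 ≤ ((K/2 : ℕ):ℝ) := by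
    have h : K ≤ 2*(K/2) + 1 := by omega
    have h' : (K:ℝ) ≤ 2*((K/2 : ℕ):ℝ) + 1 := by exact_mod_cast h
    linarith
  have hlog2gt : (0.6931471803:ℝ) < Real.log 2 := Real.log_two_gt_d9
  have hKR : (16:ℝ) ≤ (K:ℝ) := by exact_mod_cast hK16
  have hwlog : (w:ℝ) ≤ Real.log M := by
    have h1 : (w:ℝ) ≤ (K:ℝ)/8 := by
      rw [hwdef]
      exact_mod_cast Nat.cast_div_le
    have h2 : ((K/2 : ℕ):ℝ) * Real.log 2 ≤ Real.log M := le_trans hlq hlogqK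
    have h3 : (K:ℝ)/8 ≤ ((K:ℝ) - 1)/2 * 0.6931471803 := by nlinarith
    have h4 : ((K:ℝ) - 1)/2 * 0.6931471803 ≤ ((K/2 : ℕ):ℝ) * Real.log 2 := by
      have hKc : (0:ℝ) ≤ ((K:ℝ) - 1)/2 := by linarith
      have := mul_le_mul hK2cast (le_of_lt hlog2gt) (by norm_num) (by positivity)
      linarith
    linarith
  have hphlogM : ph ((w:ℕ):ℝ) ≤ ph (Real.log M) := phmono _ _ hwnn hwlog
  have hlogMnn : (0:ℝ) ≤ Real.log M := by linarith
  have hphlogpos : 0 < ph (Real.log M) := phpos _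
  have hMnn : (0:ℝ) ≤ (M:ℝ) := Nat.cast_nonneg M
  have hwwlog : (w:ℝ) * ph ((w:ℕ):ℝ) ≤ Real.log M * ph (Real.log M) :=
    mul_le_mul hwlog hphlogM (le_of_lt hphwpos) hlogMnn
  have hA : 16*(M:ℝ)*(2 + Real.log M) ≤ (ε/2) * ((M:ℝ) * (Real.log M * ph (Real.log M))) := by
    have t1 : (2:ℝ) + Real.log M ≤ 2 * Real.log M := by linarith
    have t2 : 64 ≤ ph (Real.log M) * ε := by
      rw [div_le_iff₀ hε] at hph64
      exact hph64
    have t3 : 32 * Real.log M ≤ (ε/2) * (Real.log M * ph (Real.log M)) := by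
      nlinarith [mul_nonneg hlogMnn (sub_nonneg.mpr t2)]
    calc 16*(M:ℝ)*(2 + Real.log M) ≤ 16*(M:ℝ)*(2*Real.log M) := by
          apply mul_le_mul_of_nonneg_left t1 (by positivity)
      _ = (M:ℝ) * (32 * Real.log M) := by ring
      _ ≤ (M:ℝ) * ((ε/2) * (Real.log M * ph (Real.log M))) :=
          mul_le_mul_of_nonneg_left t3 hMnn
      _ = (ε/2) * ((M:ℝ) * (Real.log M * ph (Real.log M))) := by ring
  have hB : 12*((aa α K : ℝ) + 1)*(M:ℝ) ≤ (ε/2) * ((M:ℝ) * (Real.log M * ph (Real.log M))) := by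
    have t1 : 12*((aa α K : ℝ) + 1) ≤ (ε/2) * (Real.log M * ph (Real.log M)) := by
      calc 12*((aa α K : ℝ) + 1) ≤ (ε/2) * ((w:ℝ) * ph ((w:ℕ):ℝ)) := h12
        _ ≤ (ε/2) * (Real.log M * ph (Real.log M)) :=
            mul_le_mul_of_nonneg_left hwwlog (by positivity)
    calc 12*((aa α K : ℝ) + 1)*(M:ℝ)
        ≤ ((ε/2) * (Real.log M * ph (Real.log M))) * (M:ℝ) :=
          mul_le_mul_of_nonneg_right t1 hMnn
      _ = (ε/2) * ((M:ℝ) * (Real.log M * ph (Real.log M))) := by ring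
  calc S α M ≤ 16*(M:ℝ)*(2 + Real.log M) + 12*((aa α K : ℝ) + 1)*(M:ℝ) := hdet
    _ ≤ (ε/2) * ((M:ℝ) * (Real.log M * ph (Real.log M)))
        + (ε/2) * ((M:ℝ) * (Real.log M * ph (Real.log M))) := add_le_add hA hB
    _ = ε * M * Real.log M * ph (Real.log M) := by ring

end GC

lemma sum_floor_div (v : ℕ → ℝ) (hv : ∀ j, 0 ≤ v j) (hsum : Summable v) :
    Summable (fun k : ℕ => v (k/8)) := by
  classical
  apply summable_of_sum_range_le (c := 8 * ∑' j, v j) (fun n => hv _)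
  intro n
  have h1 : ∑ k ∈ Finset.range n, v (k/8)
      = ∑ t ∈ (Finset.range n).image (fun k => k/8),
          ((Finset.range n).filter (fun k => k/8 = t)).card • v t :=
    Finset.sum_comp v (fun k => k/8)
  have hcard : ∀ t, ((Finset.range n).filter (fun k => k/8 = t)).card ≤ 8 := by
    intro t
    have hsub : (Finset.range n).filter (fun k => k/8 = t) ⊆ Finset.Ico (8*t) (8*t+8) := by
      intro k hk
      rw [Finset.mem_filter] at hk
      rw [Finset.mem_Ico]
      omega
    calc ((Finset.range n).filter (fun k => k/8 = t)).card
        ≤ (Finset.Ico (8*t) (8*t+8)).card := Finset.card_le_card hsub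
      _ = 8 := by rw [Nat.card_Ico]; omega
  rw [h1]
  have h2 : ∑ t ∈ (Finset.range n).image (fun k => k/8),
      ((Finset.range n).filter (fun k => k/8 = t)).card • v t
      ≤ ∑ t ∈ (Finset.range n).image (fun k => k/8), 8 * v t := by
    apply Finset.sum_le_sum
    intro t _
    rw [nsmul_eq_mul]
    apply mul_le_mul_of_nonneg_right _ (hv t)
    exact_mod_cast hcard t
  have h3 : ∑ t ∈ (Finset.range n).image (fun k => k/8), 8 * v t
      ≤ ∑ t ∈ Finset.range n, 8 * v t := by
    apply Finset.sum_le_sum_of_subset_of_nonneg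
    · intro t ht
      rw [Finset.mem_image] at ht
      obtain ⟨k, hk, hkt⟩ := ht
      rw [Finset.mem_range] at *
      omega
    · intro t _ _
      have := hv t
      linarith
  have h4 : ∑ t ∈ Finset.range n, 8 * v t = 8 * ∑ t ∈ Finset.range n, v t :=
    (Finset.mul_sum _ _ _).symm
  have h5 : ∑ t ∈ Finset.range n, v t ≤ ∑' j, v j :=
    Summable.sum_le_tsum (Finset.range n) (fun i _ => hv i) hsum
  linarith

lemma phi_nat_tendsto (φ : ℝ → ℝ) (hpos : ∀ x, 0 < φ x) (hmono : Monotone φ)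
    (hsum : Summable (fun k : ℕ => 1 / ((k : ℝ) * φ k))) :
    Filter.Tendsto (fun n : ℕ => φ n) Filter.atTop Filter.atTop := by
  apply tendsto_atTop_atTop_of_monotone (fun n m hnm => hmono (by exact_mod_cast hnm))
  intro b
  by_contra hcon
  push_neg at hcon
  have hb0 : 0 < b := by
    have h := hcon 0
    have h0 := hpos ((0:ℕ):ℝ)
    linarith
  have hcompare : ∀ k : ℕ, (1:ℝ)/k ≤ b * (1/((k:ℝ)*φ k)) := by
    intro k
    cases k with
    | zero => simp
    | succ n =>
      have hk : (0:ℝ) < ((n+1:ℕ):ℝ) := by exact_mod_cast Nat.succ_pos n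
      have hφ : 0 < φ ((n+1:ℕ):ℝ) := hpos _
      have hφb : φ ((n+1:ℕ):ℝ) ≤ b := le_of_lt (hcon (n+1))
      rw [mul_one_div, div_le_div_iff₀ hk (by positivity)]
      nlinarith
  exact Real.not_summable_one_div_natCast
    (Summable.of_nonneg_of_le (fun k => by positivity) hcompare (hsum.mul_left b))

theorem growth_criterion_conv (φ : ℝ → ℝ) (hpos : ∀ x, 0 < φ x) (hmono : Monotone φ)
    (hsum : Summable (fun k : ℕ => 1 / ((k : ℝ) * φ k))) :
    ∀ᵐ α ∂(MeasureTheory.volume.restrict (Set.Ioo (0:ℝ) 1)),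
      Filter.limsup
        (fun M : ℕ => S α M / ((M : ℝ) * Real.log M * φ (Real.log M)))
        Filter.atTop = 0 := by
  classical
  set ph : ℝ → ℝ := fun x => min (φ x) (x*x + 2) with hph
  have phpos : ∀ x, 0 < ph x := fun x => lt_min (hpos x) (by nlinarith [sq_nonneg x])
  have phmono : ∀ x y : ℝ, 0 ≤ x → x ≤ y → ph x ≤ ph y := by
    intro x y hx hxy
    apply le_min
    · exact le_trans (min_le_left _ _) (hmono hxy)
    · refine le_trans (min_le_right _ _) ?_
      nlinarith
  have phle : ∀ x, ph x ≤ φ x := fun x => min_le_left _ _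
  have hsum_ph : Summable (fun j : ℕ => 1/((j:ℝ) * ph j)) := by
    have h3 : Summable (fun j : ℕ => 1/((j:ℝ)*((j:ℝ)*(j:ℝ)+2))) := by
      have hp : Summable (fun j : ℕ => 1/((j:ℝ)^3)) := by
        rw [Real.summable_one_div_nat_pow]
        omega
      apply Summable.of_nonneg_of_le (fun j => by positivity) _ hp
      intro j
      cases j with
      | zero => simp
      | succ n =>
        have hk : (0:ℝ) < ((n+1:ℕ):ℝ) := by exact_mod_cast Nat.succ_pos n
        apply one_div_le_one_div_of_le (by positivity)
        nlinarith
    have hcomb : Summable (fun j : ℕ => 1/((j:ℝ)*φ j) + 1/((j:ℝ)*((j:ℝ)*(j:ℝ)+2))) :=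
      hsum.add h3
    apply Summable.of_nonneg_of_le _ _ hcomb
    · intro j
      apply div_nonneg zero_le_one
      exact mul_nonneg (Nat.cast_nonneg j) (le_of_lt (phpos _))
    · intro j
      have t1 : (0:ℝ) ≤ 1/((j:ℝ)*φ j) := by
        apply div_nonneg zero_le_one
        exact mul_nonneg (Nat.cast_nonneg j) (le_of_lt (hpos _))
      have t2 : (0:ℝ) ≤ 1/((j:ℝ)*((j:ℝ)*(j:ℝ)+2)) := by positivity
      rcases min_cases (φ ((j:ℕ):ℝ)) (((j:ℕ):ℝ)*((j:ℕ):ℝ)+2) with ⟨hmin, _⟩ | ⟨hmin, _⟩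
      · have : ph ((j:ℕ):ℝ) = φ ((j:ℕ):ℝ) := by rw [hph]; exact hmin
        rw [this]
        linarith
      · have : ph ((j:ℕ):ℝ) = ((j:ℕ):ℝ)*((j:ℕ):ℝ)+2 := by rw [hph]; exact hmin
        rw [this]
        linarith
  have hph_inf : Filter.Tendsto (fun n : ℕ => ph n) Filter.atTop Filter.atTop := by
    have h1 : Filter.Tendsto (fun n : ℕ => φ n) Filter.atTop Filter.atTop :=
      phi_nat_tendsto φ hpos hmono hsum
    have h2 : Filter.Tendsto (fun n : ℕ => (n:ℝ)*(n:ℝ)+2) Filter.atTop Filter.atTop := by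
      apply Filter.tendsto_atTop_mono (fun n : ℕ => ?_) tendsto_natCast_atTop_atTop
      have : (0:ℝ) ≤ (n:ℝ) := Nat.cast_nonneg n
      nlinarith
    apply Filter.tendsto_atTop.mpr
    intro b
    filter_upwards [Filter.tendsto_atTop.mp h1 b, Filter.tendsto_atTop.mp h2 b] with n hn1 hn2
    exact le_min hn1 hn2
  set uu : ℕ → ℕ → ℝ :=
    fun i k => max 1 ((1/((i:ℝ)+1))/48 * ((k/8 : ℕ):ℝ) * ph ((k/8 : ℕ):ℝ)) with huu
  have huu1 : ∀ i k, 1 ≤ uu i k := fun i k => le_max_left _ _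
  have huusum : ∀ i, Summable (fun k => 1/uu i k) := by
    intro i
    have hvnn : ∀ j : ℕ, (0:ℝ) ≤ 1/((j:ℝ) * ph j) := fun j =>
      div_nonneg zero_le_one (mul_nonneg (Nat.cast_nonneg j) (le_of_lt (phpos _)))
    have hv : Summable (fun k : ℕ => 1/(((k/8 : ℕ):ℝ) * ph ((k/8 : ℕ):ℝ))) :=
      sum_floor_div (fun j : ℕ => 1/((j:ℝ) * ph j)) hvnn hsum_ph
    have hfin : Summable (fun k : ℕ => if k < 8 then (1:ℝ) else 0) := by
      apply summable_of_ne_finset_zero (s := Finset.range 8)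
      intro k hk
      rw [Finset.mem_range] at hk
      simp [hk]
    have hg : Summable (fun k : ℕ =>
        (48*((i:ℝ)+1)) * (1/(((k/8 : ℕ):ℝ) * ph ((k/8 : ℕ):ℝ))) + (if k < 8 then (1:ℝ) else 0)) :=
      (hv.mul_left _).add hfin
    apply Summable.of_nonneg_of_le _ _ hg
    · intro k
      apply div_nonneg zero_le_one
      linarith [huu1 i k]
    · intro k
      have hi1 : (0:ℝ) < (i:ℝ)+1 := by positivity
      have ht1 : (0:ℝ) ≤ (48*((i:ℝ)+1)) * (1/(((k/8 : ℕ):ℝ) * ph ((k/8 : ℕ):ℝ))) := by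
        apply mul_nonneg (by positivity)
        exact div_nonneg zero_le_one (mul_nonneg (Nat.cast_nonneg _) (le_of_lt (phpos _)))
      rcases lt_or_ge k 8 with hk | hk
      · rw [if_pos hk]
        have : 1/uu i k ≤ 1 := by
          rw [div_le_one (by linarith [huu1 i k])]
          exact huu1 i k
        linarith
      · rw [if_neg (by omega)]
        have hw1 : 1 ≤ k/8 := by omega
        have hwpos : (0:ℝ) < ((k/8 : ℕ):ℝ) := by exact_mod_cast hw1
        have hppos : (0:ℝ) < ph ((k/8 : ℕ):ℝ) := phpos _
        have hupos : (0:ℝ) < (1/((i:ℝ)+1))/48 * ((k/8 : ℕ):ℝ) * ph ((k/8 : ℕ):ℝ) := by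
          positivity
        have h1 : 1/uu i k ≤ 1/((1/((i:ℝ)+1))/48 * ((k/8 : ℕ):ℝ) * ph ((k/8 : ℕ):ℝ)) :=
          one_div_le_one_div_of_le hupos (le_max_right _ _)
        have h2 : 1/((1/((i:ℝ)+1))/48 * ((k/8 : ℕ):ℝ) * ph ((k/8 : ℕ):ℝ))
            = (48*((i:ℝ)+1)) * (1/(((k/8 : ℕ):ℝ) * ph ((k/8 : ℕ):ℝ))) := by
          field_simp
        rw [h2] at h1
        linarith
  have hBC : ∀ i : ℕ, ∀ᵐ y ∂(MeasureTheory.volume.restrict (Set.Ioo (0:ℝ) 1)),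
      ∀ᶠ k in Filter.atTop,
        ¬(y ∈ Set.Ioo (0:ℝ) 1 ∧ Irrational y ∧ uu i k < (GC.aa y k : ℝ)) := fun i =>
    ae_restrict_of_ae (GC.borel_cantelli (uu i) (huu1 i) (huusum i))
  have hIoo : ∀ᵐ y ∂(MeasureTheory.volume.restrict (Set.Ioo (0:ℝ) 1)), y ∈ Set.Ioo (0:ℝ) 1 :=
    ae_restrict_mem measurableSet_Ioo
  have hirr_ae : ∀ᵐ y ∂(MeasureTheory.volume.restrict (Set.Ioo (0:ℝ) 1)), Irrational y := by
    apply ae_restrict_of_ae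
    rw [ae_iff]
    have heq : {y : ℝ | ¬ Irrational y} = Set.range ((↑) : ℚ → ℝ) := by
      ext y
      simp [Irrational, not_not]
    rw [heq]
    exact (Set.countable_range _).measure_zero _
  filter_upwards [hIoo, hirr_ae, MeasureTheory.ae_all_iff.mpr hBC] with α hα1 hα2 hα3
  have hf_nonneg : ∀ M : ℕ, 0 ≤ S α M / ((M:ℝ)*Real.log M*φ (Real.log M)) := by
    intro M
    apply div_nonneg
    · unfold S
      apply Finset.sum_nonneg
      intro m _
      exact div_nonneg zero_le_one (nd_nonneg _)
    · have h1 : (0:ℝ) ≤ Real.log M := Real.log_natCast_nonneg M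
      have h2 := le_of_lt (hpos (Real.log M))
      have h3 : (0:ℝ) ≤ (M:ℝ) := Nat.cast_nonneg M
      positivity
  have htend : Filter.Tendsto (fun M : ℕ => S α M / ((M:ℝ)*Real.log M*φ (Real.log M)))
      Filter.atTop (nhds 0) := by
    apply tendsto_order.2
    constructor
    · intro c hc
      filter_upwards with M
      exact lt_of_lt_of_le hc (hf_nonneg M)
    · intro c hc
      obtain ⟨i, hi⟩ := exists_nat_one_div_lt hc
      have hbound : ∀ᶠ k in Filter.atTop, (GC.aa α k : ℝ)
          ≤ max 1 (((1/((i:ℝ)+1))/48) * ((k/8 : ℕ):ℝ) * ph ((k/8 : ℕ):ℝ)) := by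
        filter_upwards [hα3 i] with k hk
        exact not_lt.1 (fun h => hk ⟨hα1, hα2, h⟩)
      have hmain := GC.main_per_alpha hα2 hα1 ph phpos phmono (1/((i:ℝ)+1)) (by positivity)
        hbound hph_inf
      have hlogtendsto : Filter.Tendsto (fun M : ℕ => Real.log M) Filter.atTop Filter.atTop :=
        Real.tendsto_log_atTop.comp tendsto_natCast_atTop_atTop
      filter_upwards [hmain, Filter.eventually_ge_atTop 3,
        hlogtendsto.eventually_gt_atTop 0] with M hM1 hM3 hMlog
      have hMpos : (0:ℝ) < (M:ℝ) := by
        have : (3:ℝ) ≤ (M:ℝ) := by exact_mod_cast hM3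
        linarith
      have hφpos : (0:ℝ) < φ (Real.log M) := hpos _
      have hD : (0:ℝ) < (M:ℝ)*Real.log M*φ (Real.log M) := by positivity
      have hSle : S α M ≤ (1/((i:ℝ)+1)) * ((M:ℝ)*Real.log M*φ (Real.log M)) := by
        calc S α M ≤ (1/((i:ℝ)+1)) * M * Real.log M * ph (Real.log M) := hM1
          _ ≤ (1/((i:ℝ)+1)) * M * Real.log M * φ (Real.log M) := by
              apply mul_le_mul_of_nonneg_left (phle _)
              positivity
          _ = (1/((i:ℝ)+1)) * ((M:ℝ)*Real.log M*φ (Real.log M)) := by ring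
      have hfle : S α M / ((M:ℝ)*Real.log M*φ (Real.log M)) ≤ 1/((i:ℝ)+1) :=
        (div_le_iff₀ hD).mpr (by linarith)
      calc S α M / ((M:ℝ)*Real.log M*φ (Real.log M)) ≤ 1/((i:ℝ)+1) := hfle
        _ < c := hi
  exact htend.limsup_eq
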